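/- arXiv:1610.02686 — 5 statements merged into one kernel-verified Lean document; each statement's English description precedes it below -/
import Mathlib

section
/- For every integer l ≥ 0, if T is a uniformly random subset of size t of a set S of size m, with S' ⊆ S of size k, then Prob(|T ∩ S'| ≥ l) ≤ (t·k/m)^l. -/
open Finset

lemma aux_term (m k t l i : ℕ) (hi : i < l) (hlk : l ≤ k) (hlt : l ≤ t) (ht : t ≤ m) :
    (k - i) * (t - i) * m ≤ t * k * ((m - i) * (l - i)) := by
  have h1 : k - i ≤ k * (l - i) := by
    calc k - i ≤ k := Nat.sub_le _ _
    _ = k * 1 := (Nat.mul_one k).symm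
    _ ≤ k * (l - i) := Nat.mul_le_mul_left k (by omega)
  have h2 : (t - i) * m ≤ t * (m - i) := by
    have hc : i * t ≤ i * m := Nat.mul_le_mul_left i ht
    have e1 : (t - i) * m = t * m - i * m := Nat.sub_mul t i m
    have e2 : t * (m - i) = t * m - t * i := Nat.mul_sub t m i
    have e3 : i * t = t * i := Nat.mul_comm i t
    omega
  have e1 : (k - i) * (t - i) * m = (k - i) * ((t - i) * m) := by ring
  have e2 : t * k * ((m - i) * (l - i)) = k * (l - i) * (t * (m - i)) := by ring
  rw [e1, e2]
  exact Nat.mul_le_mul h1 h2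

lemma aux_nat (m k t l : ℕ) (hlk : l ≤ k) (hlt : l ≤ t) (ht : t ≤ m) :
    k.descFactorial l * t.descFactorial l * m ^ l
      ≤ (t * k) ^ l * (m.descFactorial l * l.descFactorial l) := by
  have hm' : m ^ l = ∏ _i ∈ range l, m := by simp
  have htk : (t * k) ^ l = ∏ _i ∈ range l, (t * k) := by simp
  rw [hm', htk, Nat.descFactorial_eq_prod_range, Nat.descFactorial_eq_prod_range,
    Nat.descFactorial_eq_prod_range, Nat.descFactorial_eq_prod_range,
    ← Finset.prod_mul_distrib, ← Finset.prod_mul_distrib, ← Finset.prod_mul_distrib,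
    ← Finset.prod_mul_distrib]
  refine Finset.prod_le_prod (fun i _ => Nat.zero_le _) ?_
  intro i hi
  rw [Finset.mem_range] at hi
  exact aux_term m k t l i hi hlk hlt ht

lemma aux_ratio (m k t l : ℕ) (hm : 0 < m) (hlk : l ≤ k) (hlt : l ≤ t) (ht : t ≤ m) :
    ((k.choose l * (m - l).choose (t - l) : ℕ) : ℝ) / (m.choose t : ℝ)
      ≤ ((t * k : ℝ) / m) ^ l := by
  have hlm : l ≤ m := hlt.trans ht
  have hid := Nat.choose_mul (n := m) (k := t) (s := l) hlt
  have hmt : 0 < m.choose t := Nat.choose_pos ht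
  have hml : 0 < m.choose l := Nat.choose_pos hlm
  have key : ((k.choose l * (m - l).choose (t - l) : ℕ) : ℝ) / (m.choose t : ℝ)
      = ((k.choose l : ℝ) * (t.choose l : ℝ)) / (m.choose l : ℝ) := by
    rw [div_eq_div_iff (by positivity) (by positivity)]
    have := congrArg (fun x : ℕ => (x : ℝ)) hid
    push_cast at this ⊢
    nlinarith [this]
  rw [key, div_pow]
  rw [div_le_div_iff₀ (by positivity) (by positivity)]
  have hnat := aux_nat m k t l hlk hlt ht
  rw [Nat.descFactorial_eq_factorial_mul_choose k l,
    Nat.descFactorial_eq_factorial_mul_choose t l,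
    Nat.descFactorial_eq_factorial_mul_choose m l, Nat.descFactorial_self] at hnat
  have hcast := (Nat.cast_le (α := ℝ)).mpr hnat
  push_cast at hcast
  set F : ℝ := (l.factorial : ℝ) with hF
  have hFpos : (0:ℝ) < F := by rw [hF]; positivity
  have h2 : F ^ 2 * ((k.choose l : ℝ) * (t.choose l : ℝ) * (m:ℝ) ^ l)
      ≤ F ^ 2 * (((t:ℝ) * k) ^ l * (m.choose l : ℝ)) := by
    have e1 : F ^ 2 * ((k.choose l : ℝ) * (t.choose l : ℝ) * (m:ℝ) ^ l)
        = F * (k.choose l : ℝ) * (F * (t.choose l : ℝ)) * (m:ℝ) ^ l := by ring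
    have e2 : F ^ 2 * (((t:ℝ) * k) ^ l * (m.choose l : ℝ))
        = ((t:ℝ) * k) ^ l * (F * (m.choose l : ℝ) * F) := by ring
    rw [e1, e2]
    exact hcast
  have := le_of_mul_le_mul_left h2 (by positivity)
  convert this using 2 <;> push_cast <;> ring

/-- Hypergeometric tail bound: if `T` is a uniformly random `t`-element subset of an
`m`-element set `S`, and `S' ⊆ S` has `k` elements, then for every `l`,
`Prob(|T ∩ S'| ≥ l) ≤ (t·k/m)^l`. -/
theorem stmt0 {α : Type*} [DecidableEq α] (S S' : Finset α) (m k t l : ℕ)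
    (hm : 0 < m) (hS : S.card = m) (hsub : S' ⊆ S) (hk : S'.card = k) (ht : t ≤ m) :
    (((S.powersetCard t).filter (fun T => l ≤ (T ∩ S').card)).card : ℝ) / (m.choose t : ℝ)
      ≤ ((t * k : ℝ) / m) ^ l := by
  classical
  have hmt : 0 < m.choose t := Nat.choose_pos ht
  have hrhs : (0:ℝ) ≤ ((t * k : ℝ) / m) ^ l := by positivity
  by_cases hcase : l ≤ t ∧ l ≤ k
  · obtain ⟨hlt, hlk⟩ := hcase
    have hcount : (((S.powersetCard t).filter (fun T => l ≤ (T ∩ S').card)).card : ℕ)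
        ≤ k.choose l * (m - l).choose (t - l) := by
      have key : ∀ T : Finset α, ∃ A : Finset α,
          l ≤ (T ∩ S').card → A ⊆ T ∩ S' ∧ A.card = l := by
        intro T
        by_cases h : l ≤ (T ∩ S').card
        · obtain ⟨A, hA, hAc⟩ := Finset.exists_subset_card_eq h
          exact ⟨A, fun _ => ⟨hA, hAc⟩⟩
        · exact ⟨∅, fun h' => absurd h' h⟩
      choose f hf using key
      have hle := Finset.card_le_card_of_injOn
        (f := fun T => (⟨f T, T \ f T⟩ : Σ _ : Finset α, Finset α))
        (s := (S.powersetCard t).filter (fun T => l ≤ (T ∩ S').card))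
        (t := (S'.powersetCard l).sigma (fun A => (S \ A).powersetCard (t - l)))
        ?_ ?_
      · refine hle.trans ?_
        rw [Finset.card_sigma]
        have hconst : ∀ A ∈ S'.powersetCard l, ((S \ A).powersetCard (t - l)).card
            = (m - l).choose (t - l) := by
          intro A hA
          rw [Finset.mem_powersetCard] at hA
          rw [Finset.card_powersetCard, Finset.card_sdiff_of_subset (hA.1.trans hsub), hS, hA.2]
        rw [Finset.sum_congr rfl hconst, Finset.sum_const, Finset.card_powersetCard, hk,
          smul_eq_mul]
      · intro T hT
        rw [Finset.mem_coe, Finset.mem_filter, Finset.mem_powersetCard] at hT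
        obtain ⟨⟨hTS, hTc⟩, hTl⟩ := hT
        obtain ⟨hfsub, hfcard⟩ := hf T hTl
        have hfT : f T ⊆ T := hfsub.trans Finset.inter_subset_left
        rw [Finset.mem_coe, Finset.mem_sigma, Finset.mem_powersetCard, Finset.mem_powersetCard]
        refine ⟨⟨hfsub.trans Finset.inter_subset_right, hfcard⟩, ?_, ?_⟩
        · intro x hx
          rw [Finset.mem_sdiff] at hx ⊢
          exact ⟨hTS hx.1, hx.2⟩
        · rw [Finset.card_sdiff_of_subset hfT, hTc, hfcard]
      · intro T1 h1 T2 h2 heq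
        rw [Finset.mem_coe, Finset.mem_filter, Finset.mem_powersetCard] at h1 h2
        simp only [Sigma.mk.inj_iff] at heq
        have hA : f T1 = f T2 := heq.1
        have hB : T1 \ f T1 = T2 \ f T2 := by
          have h := heq.2
          rw [hA] at h ⊢
          exact heq_iff_eq.mp h
        have hf1 : f T1 ⊆ T1 := ((hf T1 h1.2).1).trans Finset.inter_subset_left
        have hf2 : f T2 ⊆ T2 := ((hf T2 h2.2).1).trans Finset.inter_subset_left
        have e1 : T1 = f T1 ∪ (T1 \ f T1) := (Finset.union_sdiff_of_subset hf1).symm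
        have e2 : T2 = f T2 ∪ (T2 \ f T2) := (Finset.union_sdiff_of_subset hf2).symm
        have hB' : T1 \ f T2 = T2 \ f T2 := by rw [← hA] at hB ⊢; exact hB
        rw [e1, e2, hA, hB']
    calc (((S.powersetCard t).filter (fun T => l ≤ (T ∩ S').card)).card : ℝ) / (m.choose t : ℝ)
        ≤ ((k.choose l * (m - l).choose (t - l) : ℕ) : ℝ) / (m.choose t : ℝ) := by
          have h := (Nat.cast_le (α := ℝ)).mpr hcount
          exact (div_le_div_iff_of_pos_right (by positivity)).mpr h
      _ ≤ ((t * k : ℝ) / m) ^ l := aux_ratio m k t l hm hlk hlt ht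
  · have hempty : (S.powersetCard t).filter (fun T => l ≤ (T ∩ S').card) = ∅ := by
      rw [Finset.filter_eq_empty_iff]
      intro T hT
      rw [Finset.mem_powersetCard] at hT
      have h1 : (T ∩ S').card ≤ t := le_trans (Finset.card_le_card Finset.inter_subset_left)
        hT.2.le
      have h2 : (T ∩ S').card ≤ k := by
        rw [← hk]; exact Finset.card_le_card Finset.inter_subset_right
      omega
    rw [hempty]
    simpa using hrhs
end

section
/- Let S' be a set of size k and let A be an antichain of subsets of S'. If T is a uniformly random t-element subset of an m-element set S ⊇ S', then Prob(T ∩ S' ∈ A) ≤ max over r of [ C(k,r)·C(m−k, t−r) / C(m,t) ], where the maximum is over 0 ≤ r ≤ k. (This follows from the LYM inequality.) -/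
open Finset

/-- If `T` is a uniformly random `t`-element subset of an `m`-element set `S`,
`S' ⊆ S` has `k` elements, and `A` is an antichain of subsets of `S'`, then
`Prob(T ∩ S' ∈ A)` is at most the maximum over `0 ≤ r ≤ k` of
`C(k,r)·C(m−k,t−r)/C(m,t)`. -/
theorem stmt1 {α : Type*} [DecidableEq α] (S S' : Finset α) (m k t : ℕ)
    (hm : 0 < m) (hS : S.card = m) (hsub : S' ⊆ S) (hk : S'.card = k) (ht : t ≤ m)
    (A : Finset (Finset α)) (hAsub : ∀ r ∈ A, r ⊆ S')
    (hA : IsAntichain (· ⊆ ·) (A : Set (Finset α))) :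
    (((S.powersetCard t).filter (fun T => T ∩ S' ∈ A)).card : ℝ) / (m.choose t : ℝ)
      ≤ (Finset.range (k + 1)).sup' (by simp)
          (fun r => ((k.choose r : ℝ) * ((m - k).choose (t - r) : ℝ)) / (m.choose t : ℝ)) := by
  classical
  have hc : (0 : ℝ) < (m.choose t : ℝ) := by exact_mod_cast Nat.choose_pos ht
  set f : ℕ → ℝ := fun r => (k.choose r : ℝ) * ((m - k).choose (t - r) : ℝ) with hf
  obtain ⟨r0, hr0mem, hr0⟩ := Finset.exists_mem_eq_sup' (by simp : (Finset.range (k+1)).Nonempty) f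
  have hfmax : ∀ r ∈ Finset.range (k + 1), f r ≤ f r0 := by
    intro r hr
    rw [← hr0]
    exact Finset.le_sup' f hr
  have hf0 : (0:ℝ) ≤ f r0 := by positivity
  have hsup : f r0 / (m.choose t : ℝ)
      ≤ (Finset.range (k + 1)).sup' (by simp)
          (fun r => ((k.choose r : ℝ) * ((m - k).choose (t - r) : ℝ)) / (m.choose t : ℝ)) :=
    Finset.le_sup' (f := fun r => f r / (m.choose t : ℝ)) hr0mem
  refine le_trans ?_ hsup
  rw [div_le_div_iff_of_pos_right hc]
  -- Step 1: count ≤ ∑_{B ∈ A} C(m-k, t-|B|)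
  have hSS' : (S \ S').card = m - k := by rw [card_sdiff_of_subset hsub, hS, hk]
  have step1 : ((S.powersetCard t).filter (fun T => T ∩ S' ∈ A)).card
      ≤ ∑ B ∈ A, (m - k).choose (t - B.card) := by
    have hsubU : (S.powersetCard t).filter (fun T => T ∩ S' ∈ A)
        ⊆ A.biUnion (fun B => (S.powersetCard t).filter (fun T => T ∩ S' = B)) := by
      intro T hT
      simp only [mem_filter, mem_biUnion] at hT ⊢
      exact ⟨T ∩ S', hT.2, hT.1, rfl⟩
    refine (Finset.card_le_card hsubU).trans ((Finset.card_biUnion_le).trans ?_)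
    refine Finset.sum_le_sum fun B hB => ?_
    rw [← hSS', ← Finset.card_powersetCard]
    apply Finset.card_le_card_of_injOn (fun T => T \ S')
    · intro T hT
      simp only [coe_filter, Set.mem_setOf_eq, mem_filter, mem_powersetCard] at hT
      obtain ⟨⟨hTS, hTcard⟩, hTB⟩ := hT
      simp only [mem_coe, mem_powersetCard]
      refine ⟨sdiff_subset_sdiff hTS le_rfl, ?_⟩
      have h1 : T \ S' = T \ (T ∩ S') := by
        ext a; simp only [mem_sdiff, mem_inter]; tauto
      rw [h1, card_sdiff_of_subset inter_subset_left, hTcard, hTB]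
    · intro T₁ h₁ T₂ h₂ heq
      simp only [coe_filter, Set.mem_setOf_eq, mem_powersetCard] at h₁ h₂
      have e₁ : T₁ = (T₁ ∩ S') ∪ (T₁ \ S') := by
        ext a; simp only [mem_union, mem_inter, mem_sdiff]; tauto
      have e₂ : T₂ = (T₂ ∩ S') ∪ (T₂ \ S') := by
        ext a; simp only [mem_union, mem_inter, mem_sdiff]; tauto
      rw [e₁, e₂, h₁.2, h₂.2]
      exact congrArg (fun s => B ∪ s) heq
  -- Step 2: group by size
  have hcardle : ∀ B ∈ A, B.card ∈ Finset.range (k + 1) := by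
    intro B hB
    rw [mem_range, Nat.lt_succ_iff, ← hk]
    exact card_le_card (hAsub B hB)
  have step2 : ∑ B ∈ A, (m - k).choose (t - B.card)
      = ∑ r ∈ Finset.range (k + 1), (A.slice r).card * (m - k).choose (t - r) := by
    rw [← Finset.sum_fiberwise_of_maps_to hcardle (fun B => (m - k).choose (t - B.card))]
    refine Finset.sum_congr rfl fun r _ => ?_
    calc ∑ B ∈ A.filter (fun B => B.card = r), (m - k).choose (t - B.card)
        = ∑ _B ∈ A.filter (fun B => B.card = r), (m - k).choose (t - r) :=
          Finset.sum_congr rfl fun B hB => by rw [(Finset.mem_filter.1 hB).2]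
      _ = (A.slice r).card * (m - k).choose (t - r) := by
          rw [Finset.sum_const, smul_eq_mul]
          rfl
  -- LYM transfer to subsets of S'
  have LYM : ∑ r ∈ Finset.range (k + 1), ((A.slice r).card : ℝ) / (k.choose r : ℝ) ≤ 1 := by
    set e : Finset α → Finset ↥S' := fun B => B.subtype (· ∈ S') with he
    have hde : ∀ B ⊆ S', (e B).map (Function.Embedding.subtype _) = B := by
      intro B hB
      exact Finset.subtype_map_of_mem (fun x hx => hB hx)
    set A' : Finset (Finset ↥S') := A.image e with hA'
    have hinj : Set.InjOn e A := by
      intro B₁ h₁ B₂ h₂ hBe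
      rw [← hde B₁ (hAsub B₁ h₁), ← hde B₂ (hAsub B₂ h₂), hBe]
    have hcard : ∀ B ⊆ S', (e B).card = B.card := by
      intro B hB
      have h := Finset.card_map (s := e B) (Function.Embedding.subtype (· ∈ S'))
      rw [hde B hB] at h
      exact h.symm
    have hanti : IsAntichain (· ⊆ ·) (A' : Set (Finset ↥S')) := by
      rintro C₁ hC₁ C₂ hC₂ hne hle
      simp only [hA', coe_image, Set.mem_image, mem_coe] at hC₁ hC₂
      obtain ⟨B₁, hB₁, rfl⟩ := hC₁
      obtain ⟨B₂, hB₂, rfl⟩ := hC₂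
      have hBne : B₁ ≠ B₂ := fun h => hne (by rw [h])
      have hBle : B₁ ⊆ B₂ := by
        rw [← hde B₁ (hAsub B₁ hB₁), ← hde B₂ (hAsub B₂ hB₂)]
        exact Finset.map_subset_map.2 hle
      exact hA hB₁ hB₂ hBne hBle
    have hcardS' : Fintype.card ↥S' = k := by rw [Fintype.card_coe, hk]
    have hslice : ∀ r, (A'.slice r).card = (A.slice r).card := by
      intro r
      have : A'.slice r = (A.slice r).image e := by
        rw [hA', Finset.slice, Finset.slice, Finset.filter_image]
        congr 1
        refine Finset.filter_congr fun B hB => ?_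
        rw [hcard B (hAsub B hB)]
      rw [this]
      exact Finset.card_image_of_injOn (hinj.mono (Finset.slice_subset (r := r)))
    have := Finset.sum_card_slice_div_choose_le_one (𝕜 := ℝ) hanti
    rw [hcardS'] at this
    refine le_trans (le_of_eq ?_) this
    refine Finset.sum_congr rfl fun r _ => ?_
    rw [hslice r]
  -- Step 3: conclude
  calc (((S.powersetCard t).filter (fun T => T ∩ S' ∈ A)).card : ℝ)
      ≤ ∑ r ∈ Finset.range (k + 1), ((A.slice r).card : ℝ) * ((m - k).choose (t - r) : ℝ) := by
        have h := step2 ▸ step1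
        exact_mod_cast h
    _ ≤ ∑ r ∈ Finset.range (k + 1), (((A.slice r).card : ℝ) / (k.choose r : ℝ)) * f r0 := by
        refine Finset.sum_le_sum fun r hr => ?_
        have hkr : 0 < (k.choose r : ℝ) := by
          exact_mod_cast Nat.choose_pos (Nat.lt_succ_iff.1 (Finset.mem_range.1 hr))
        have : ((A.slice r).card : ℝ) * ((m - k).choose (t - r) : ℝ)
            = (((A.slice r).card : ℝ) / (k.choose r : ℝ)) * f r := by
          rw [hf]
          field_simp
        rw [this]
        exact mul_le_mul_of_nonneg_left (hfmax r hr) (by positivity)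
    _ = (∑ r ∈ Finset.range (k + 1), ((A.slice r).card : ℝ) / (k.choose r : ℝ)) * f r0 := by
        rw [Finset.sum_mul]
    _ ≤ 1 * f r0 := mul_le_mul_of_nonneg_right LYM hf0
    _ = f r0 := one_mul _
end

section
/- If a depth-2 circuit C over n input bits reads (depends on) only a set R of input bits with |R| = r ≤ n/2, and n − r is even and positive, then C fails to compute MAJ_n on at least C(n−r, (n−r)/2) · 2^(r−1) / 2 inputs; more precisely, for every assignment B to R and every assignment A to U = X∖R with weight exactly |U|/2 minus the deviation making the total weight cross n/2, the circuit errs on at least one of the pair (A⊔B, ¬A⊔B) whenever A ≠ ¬A and MAJ_n(A⊔B) ≠ MAJ_n(¬A⊔B). -/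
/-- The majority function `MAJ_n` on `{0,1}^n`: outputs `1` iff the weight is at least `n/2`. -/
def majFun (n : ℕ) (x : Fin n → Bool) : Bool :=
  decide (n ≤ 2 * (Finset.univ.filter (fun i => x i = true)).card)

open Finset

lemma wt_indicator {n : ℕ} (T : Finset (Fin n)) :
    (univ.filter fun i => (fun i => decide (i ∈ T)) i = true).card = T.card := by
  congr 1
  ext i
  simp

lemma inj_bound {n : ℕ} (R B : Finset (Fin n)) (hB : B ⊆ R) (p : ℕ → Bool) (j : ℕ)
    (hp : p (B.card + j) = true) :
    (Rᶜ.card).choose j ≤ (univ.filter (fun x : Fin n → Bool =>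
      R.filter (fun i => x i = true) = B ∧ p ((univ.filter fun i => x i = true).card) = true)).card := by
  rw [← Finset.card_powersetCard j Rᶜ]
  apply Finset.card_le_card_of_injOn (fun S => (fun i => decide (i ∈ B ∪ S)))
  · intro S hS
    rw [Finset.mem_coe, Finset.mem_powersetCard] at hS
    obtain ⟨hSsub, hScard⟩ := hS
    have hdisj : Disjoint B S := by
      apply Finset.disjoint_left.mpr
      intro a haB haS
      exact (Finset.mem_compl.mp (hSsub haS)) (hB haB)
    have hwt : (univ.filter fun i => decide (i ∈ B ∪ S) = true).card = B.card + j := by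
      have : (univ.filter fun i => decide (i ∈ B ∪ S) = true) = B ∪ S := by
        ext i; simp
      rw [this, Finset.card_union_of_disjoint hdisj, hScard]
    simp only [Finset.mem_coe, Finset.mem_filter, Finset.mem_univ, true_and]
    refine ⟨?_, by rw [hwt]; exact hp⟩
    · ext i
      simp only [Finset.mem_filter, decide_eq_true_eq, Finset.mem_union]
      constructor
      · rintro ⟨hiR, hiB | hiS⟩
        · exact hiB
        · exact absurd hiR (Finset.mem_compl.mp (hSsub hiS))
      · intro hiB
        exact ⟨hB hiB, Or.inl hiB⟩
  · intro S₁ h₁ S₂ h₂ heq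
    simp only [Finset.mem_coe, Finset.mem_powersetCard] at h₁ h₂
    obtain ⟨h₁s, -⟩ := h₁
    obtain ⟨h₂s, -⟩ := h₂
    have hun : B ∪ S₁ = B ∪ S₂ := by
      ext i
      have h := congrFun heq i
      simp only [Finset.mem_union, decide_eq_decide] at h
      simp [Finset.mem_union, h]
    ext i
    constructor
    · intro hi
      have hiU : i ∈ B ∪ S₂ := hun ▸ (Finset.mem_union_right B hi)
      rcases Finset.mem_union.mp hiU with h | h
      · exact absurd (hB h) (Finset.mem_compl.mp (h₁s hi))
      · exact h
    · intro hi
      have hiU : i ∈ B ∪ S₁ := hun ▸ (Finset.mem_union_right B hi)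
      rcases Finset.mem_union.mp hiU with h | h
      · exact absurd (hB h) (Finset.mem_compl.mp (h₂s hi))
      · exact h

lemma LV {n : ℕ} (R : Finset (Fin n)) (w : ℕ) :
    n.choose w ≤ ∑ B ∈ R.powerset, (Rᶜ.card).choose (w - B.card) := by
  have e1 : n.choose w = (Finset.powersetCard w (univ : Finset (Fin n))).card := by
    rw [Finset.card_powersetCard, Finset.card_univ, Fintype.card_fin]
  have e2 : ∑ B ∈ R.powerset, (Rᶜ.card).choose (w - B.card)
      = ((R.powerset).sigma (fun B => Finset.powersetCard (w - B.card) Rᶜ)).card := by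
    rw [Finset.card_sigma]
    apply Finset.sum_congr rfl
    intro B _
    rw [Finset.card_powersetCard]
  rw [e1, e2]
  apply Finset.card_le_card_of_injOn (fun W => ⟨W ∩ R, W \ R⟩)
  · intro W hW
    rw [Finset.mem_coe, Finset.mem_powersetCard] at hW
    obtain ⟨-, hWcard⟩ := hW
    rw [Finset.mem_coe, Finset.mem_sigma]
    constructor
    · exact Finset.mem_powerset.mpr Finset.inter_subset_right
    · rw [Finset.mem_powersetCard]
      constructor
      · intro i hi
        rw [Finset.mem_compl]
        exact (Finset.mem_sdiff.mp hi).2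
      · show (W \ R).card = w - (W ∩ R).card
        have := Finset.card_inter_add_card_sdiff W R
        omega
  · intro W₁ h₁ W₂ h₂ heq
    have hfst : W₁ ∩ R = W₂ ∩ R := congrArg Sigma.fst heq
    have hsnd : W₁ \ R = W₂ \ R := by
      have := congrArg Sigma.snd heq
      simpa using this
    have recon : ∀ W : Finset (Fin n), (W ∩ R) ∪ (W \ R) = W := by
      intro W
      ext i
      simp only [Finset.mem_union, Finset.mem_inter, Finset.mem_sdiff]
      tauto
    rw [← recon W₁, ← recon W₂, hfst, hsnd]

lemma fiber_bound {n : ℕ} (R : Finset (Fin n)) (C : (Fin n → Bool) → Bool)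
    (hdep : ∀ x y : Fin n → Bool, (∀ i ∈ R, x i = y i) → C x = C y)
    (hhm : (n+1)/2 ≤ Rᶜ.card) (hm2 : 2 ≤ Rᶜ.card) (hn : 1 ≤ n)
    (B : Finset (Fin n)) (hB : B ⊆ R) :
    (Rᶜ.card).choose ((n+1)/2 - 1 - B.card) + (Rᶜ.card).choose ((n+1)/2 - B.card)
      ≤ ((univ.filter (fun x : Fin n → Bool => C x ≠ majFun n x)).filter
          (fun x => R.filter (fun i => x i = true) = B)).card
        + (Rᶜ.card).choose (Rᶜ.card / 2) := by
  set m := Rᶜ.card with hm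
  set h := (n+1)/2 with hh
  set b := B.card with hb
  set cv := C (fun i => decide (i ∈ B)) with hcv
  set Efib := ((univ.filter (fun x : Fin n → Bool => C x ≠ majFun n x)).filter
          (fun x => R.filter (fun i => x i = true) = B)) with hEfib
  -- C is constant = cv on the fiber
  have hconst : ∀ x : Fin n → Bool, R.filter (fun i => x i = true) = B → C x = cv := by
    intro x hx
    apply hdep
    intro i hi
    have : x i = true ↔ i ∈ B := by
      rw [← hx]
      simp [Finset.mem_filter, hi]
    cases hxi : x i
    · have hnb : i ∉ B := by
        intro hIB
        have h2 := this.mpr hIB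
        rw [hxi] at h2
        exact Bool.false_ne_true h2
      simp [hnb]
    · simp [this.mp hxi]
  -- key counting: if cv = false, weight-(b+j) points with b+j ≥ h are errors
  have keyT : ∀ j : ℕ, cv = false → h ≤ b + j → m.choose j ≤ Efib.card := by
    intro j hcvf hbj
    have hp : (fun w => decide (n ≤ 2*w)) (b + j) = true := by
      simp only [decide_eq_true_eq]
      omega
    refine le_trans (inj_bound R B hB (fun w => decide (n ≤ 2*w)) j hp) ?_
    apply Finset.card_le_card
    intro x hx
    simp only [Finset.mem_filter, Finset.mem_univ, true_and, decide_eq_true_eq] at hx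
    obtain ⟨hproj, hw⟩ := hx
    rw [hEfib]
    simp only [Finset.mem_filter, Finset.mem_univ, true_and]
    refine ⟨?_, hproj⟩
    rw [hconst x hproj, hcvf]
    have : majFun n x = true := by
      unfold majFun
      simp only [decide_eq_true_eq]
      exact hw
    simp [this]
  have keyF : ∀ j : ℕ, cv = true → b + j < h → m.choose j ≤ Efib.card := by
    intro j hcvt hbj
    have hp : (fun w => decide (2*w < n)) (b + j) = true := by
      simp only [decide_eq_true_eq]
      omega
    refine le_trans (inj_bound R B hB (fun w => decide (2*w < n)) j hp) ?_
    apply Finset.card_le_card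
    intro x hx
    simp only [Finset.mem_filter, Finset.mem_univ, true_and, decide_eq_true_eq] at hx
    obtain ⟨hproj, hw⟩ := hx
    rw [hEfib]
    simp only [Finset.mem_filter, Finset.mem_univ, true_and]
    refine ⟨?_, hproj⟩
    rw [hconst x hproj, hcvt]
    have : majFun n x = false := by
      unfold majFun
      simp only [decide_eq_false_iff_not]
      omega
    simp [this]
  have hcmid : ∀ j : ℕ, m.choose j ≤ m.choose (m/2) := fun j => Nat.choose_le_middle j m
  have hcm2 : 2 ≤ m.choose (m/2) := by
    calc 2 ≤ m := hm2
      _ = m.choose 1 := (Nat.choose_one_right m).symm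
      _ ≤ m.choose (m/2) := Nat.choose_le_middle 1 m
  by_cases hbh : h ≤ b
  · -- degenerate: both chooses are at index 0, i.e. = 1
    have e1 : h - 1 - b = 0 := by omega
    have e2 : h - b = 0 := by omega
    rw [e1, e2, Nat.choose_zero_right]
    omega
  · push_neg at hbh
    set p := h - 1 - b with hp
    have hpb : b = h - 1 - p := by omega
    have hple : p ≤ m - 1 := by omega
    have e2 : h - b = p + 1 := by omega
    rw [e2]
    -- fibcard ≥ min side; other side ≤ central
    have hfib : m.choose p ≤ Efib.card ∨ m.choose (p+1) ≤ Efib.card := by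
      rcases Nat.lt_or_ge (2*p+1) m with hcase | hcase
      · -- low side: fib ≥ C(m,p)
        left
        cases hcvv : cv
        · -- cv false: use j = m - p
          have : m.choose (m - p) ≤ Efib.card := keyT (m - p) hcvv (by omega)
          rwa [Nat.choose_symm (by omega)] at this
        · exact keyF p hcvv (by omega)
      · -- high side: fib ≥ C(m,p+1)
        right
        cases hcvv : cv
        · exact keyT (p+1) hcvv (by omega)
        · have : m.choose (m - (p+1)) ≤ Efib.card := keyF (m - (p+1)) hcvv (by omega)
          rwa [Nat.choose_symm (by omega)] at this
    rcases hfib with hf | hf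
    · have := hcmid (p+1)
      omega
    · have := hcmid p
      omega


/-- (k+1) * C(2k+1, k) = (2k+1) * C(2k, k) -/
lemma cent_odd (k : ℕ) : (k+1) * (2*k+1).choose k = (2*k+1) * (2*k).choose k := by
  have h := Nat.add_one_mul_choose_eq (2*k) k
  have hsymm : (2*k+1).choose (k+1) = (2*k+1).choose k := by
    rw [← Nat.choose_symm (by omega : k+1 ≤ 2*k+1)]
    congr 1; omega
  rw [hsymm] at h
  rw [mul_comm]
  exact h.symm

/-- C(2k+2, k+1) = 2 * C(2k+1, k) -/
lemma cent_even (k : ℕ) : (2*k+2).choose (k+1) = 2 * ((2*k+1).choose k) := by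
  have h : (2*k+1+1).choose (k+1) = (2*k+1).choose k + (2*k+1).choose (k+1) :=
    Nat.choose_succ_succ' _ _
  have hsymm : (2*k+1).choose (k+1) = (2*k+1).choose k := by
    rw [← Nat.choose_symm (by omega : k+1 ≤ 2*k+1)]
    congr 1; omega
  have e : 2*k+1+1 = 2*k+2 := by omega
  rw [e] at h
  omega

/-- (K+1) * C(2K+2, K+1) = 2*(2K+1) * C(2K, K) -/
lemma cent_step (K : ℕ) : (K+1) * (2*K+2).choose (K+1) = 2 * (2*K+1) * (2*K).choose K := by
  rw [cent_even K]
  have h := cent_odd K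
  nlinarith [h]

lemma cent_sq_step (K : ℕ) :
    ((2*(K+1)).choose (K+1))^2 * (K+1)^2 = 4 * (2*K+1)^2 * ((2*K).choose K)^2 := by
  have h1 := cent_step K
  have h2 : ((K+1) * (2*K+2).choose (K+1))^2 = (2 * (2*K+1) * (2*K).choose K)^2 := by rw [h1]
  have e : 2*(K+1) = 2*K+2 := by ring
  rw [e]
  nlinarith [h2]

/-- monotonicity of cent(2k)^2 (4k+1) / 16^k -/
lemma mono : ∀ K k : ℕ, k ≤ K →
    ((2*k).choose k)^2 * ((4*k+1) * 16^K) ≤ ((2*K).choose K)^2 * ((4*K+1) * 16^k) := by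
  intro K
  induction K with
  | zero => intro k hk; interval_cases k; simp
  | succ K ih =>
    intro k hk
    rcases Nat.lt_or_ge k (K+1) with h | h
    · have IH := ih k (by omega)
      have hstep := cent_sq_step K
      have hineq : (2*K+2)^2 * (4*K+1) + 1 ≤ (2*K+1)^2*(4*K+5) := by nlinarith
      have main : ((2*k).choose k)^2 * ((4*k+1)*16^(K+1)) * ((K+1)^2 * (4*K+1))
          ≤ ((2*(K+1)).choose (K+1))^2 * ((4*(K+1)+1) * 16^k) * ((K+1)^2 * (4*K+1)) := by
        have e1 : ((2*(K+1)).choose (K+1))^2 * ((4*(K+1)+1) * 16^k) * ((K+1)^2 * (4*K+1))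
            = (((2*K).choose K)^2 * ((4*K+1) * 16^k)) * (4 * ((2*K+1)^2 * (4*K+5))) := by
          have : ((2*(K+1)).choose (K+1))^2 * ((4*(K+1)+1) * 16^k) * ((K+1)^2 * (4*K+1))
              = (((2*(K+1)).choose (K+1))^2 * (K+1)^2) * ((4*K+5) * 16^k * (4*K+1)) := by ring
          rw [this, hstep]; ring
        rw [e1]
        calc ((2*k).choose k)^2 * ((4*k+1)*16^(K+1)) * ((K+1)^2 * (4*K+1))
            = (((2*k).choose k)^2 * ((4*k+1)*16^K)) * (16 * ((K+1)^2 * (4*K+1))) := by ring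
          _ ≤ (((2*K).choose K)^2 * ((4*K+1) * 16^k)) * (16 * ((K+1)^2 * (4*K+1))) :=
              Nat.mul_le_mul_right _ IH
          _ ≤ (((2*K).choose K)^2 * ((4*K+1) * 16^k)) * (4 * ((2*K+1)^2 * (4*K+5))) := by
              apply Nat.mul_le_mul_left
              nlinarith
      have hpos : 0 < (K+1)^2 * (4*K+1) := by positivity
      exact Nat.le_of_mul_le_mul_right main hpos
    · have hk' : k = K + 1 := by omega
      subst hk'
      exact le_refl _

lemma sq_le_sq_nat {a b : ℕ} (h : a^2 ≤ b^2) : a ≤ b := by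
  by_contra hc
  push_neg at hc
  have := Nat.pow_lt_pow_left hc (by norm_num : 2 ≠ 0)
  omega

lemma growth_odd (k t : ℕ) (hk : 1 ≤ k) (ht : t ≤ k - 1) :
    5 * 2^(2*t+1) * ((2*k).choose k) ≤ 4 * ((2*(k+t+1)).choose (k+t+1)) := by
  set K := k + t + 1 with hK
  have hmono := mono K k (by omega)
  -- cent(2K)^2 (4K+1) 16^k ≥ cent(2k)^2 (4k+1) 16^K
  apply sq_le_sq_nat
  have h16 : (16:ℕ)^K = 16^k * 16^(t+1) := by
    rw [hK, show k+t+1 = k+(t+1) by omega, pow_add]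
  have hcancel : ((2*k).choose k)^2 * ((4*k+1) * 16^(t+1)) ≤ ((2*K).choose K)^2 * (4*K+1) := by
    have : ((2*k).choose k)^2 * ((4*k+1) * 16^(t+1)) * 16^k ≤ ((2*K).choose K)^2 * (4*K+1) * 16^k := by
      calc ((2*k).choose k)^2 * ((4*k+1) * 16^(t+1)) * 16^k
          = ((2*k).choose k)^2 * ((4*k+1) * 16^K) := by rw [h16]; ring
        _ ≤ ((2*K).choose K)^2 * ((4*K+1) * 16^k) := hmono
        _ = ((2*K).choose K)^2 * (4*K+1) * 16^k := by ring
    exact Nat.le_of_mul_le_mul_right this (by positivity)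
  -- need (5*2^(2t+1)*c)^2 ≤ (4*cent)^2
  -- i.e. 25*4^(2t+1)*c^2 ≤ 16*cent^2
  have hnum : 25 * (4*K+1) ≤ 64 * (4*k+1) := by omega
  have h4 : (2:ℕ)^(2*t+1) * 2^(2*t+1) = 4^(2*t+1) := by
    rw [← mul_pow]; norm_num
  have h164 : (16:ℕ)^(t+1) = 4 * 4^(2*t+1) := by
    have e1 : (16:ℕ)^(t+1) = 4^(2*(t+1)) := by
      rw [pow_mul]; norm_num
    rw [e1, show 2*(t+1) = (2*t+1)+1 by omega, pow_succ]
    ring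
  calc (5 * 2^(2*t+1) * ((2*k).choose k))^2
      = 25 * 4^(2*t+1) * ((2*k).choose k)^2 := by rw [← h4]; ring
    _ ≤ (4 * ((2*K).choose K))^2 := by
        -- multiply hcancel by appropriate factors
        have step : 25 * 4^(2*t+1) * ((2*k).choose k)^2 * (4*K+1)
            ≤ (16 * ((2*K).choose K)^2) * (4*K+1) := by
          calc 25 * 4^(2*t+1) * ((2*k).choose k)^2 * (4*K+1)
              = (4^(2*t+1) * ((2*k).choose k)^2) * (25 * (4*K+1)) := by ring
            _ ≤ (4^(2*t+1) * ((2*k).choose k)^2) * (64 * (4*k+1)) := Nat.mul_le_mul_left _ hnum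
            _ = 4^(2*t+1) * ((2*k).choose k)^2 * (64 * (4*k+1)) := by ring
            _ = 16 * (((2*k).choose k)^2 * ((4*k+1) * 16^(t+1))) := by rw [h164]; ring
            _ ≤ 16 * (((2*K).choose K)^2 * (4*K+1)) := Nat.mul_le_mul_left _ hcancel
            _ = (16 * ((2*K).choose K)^2) * (4*K+1) := by ring
        have := Nat.le_of_mul_le_mul_right step (by positivity : 0 < 4*K+1)
        calc 25 * 4^(2*t+1) * ((2*k).choose k)^2 ≤ 16 * ((2*K).choose K)^2 := this
          _ = (4 * ((2*K).choose K))^2 := by ring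

lemma growth_even_poly (k t : ℕ) (hk : 2 ≤ k) (ht1 : 1 ≤ t) (ht : t ≤ k) :
    25*(k+t+1)^2*(4*(k+t)+1) ≤ 16*(2*(k+t)+1)^2*(4*k+1) := by nlinarith [sq_nonneg (k - t), Nat.sub_add_cancel ht]

lemma growth_even (k t : ℕ) (hk : 2 ≤ k) (ht1 : 1 ≤ t) (ht : t ≤ k) :
    5 * 2^(2*t) * ((2*k).choose k) ≤ 4 * ((2*(k+t)+1).choose (k+t)) := by
  set K := k + t with hK
  have hmono := mono K k (by omega)
  have h16 : (16:ℕ)^K = 16^k * 16^t := by rw [hK, pow_add]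
  have hcancel : ((2*k).choose k)^2 * ((4*k+1) * 16^t) ≤ ((2*K).choose K)^2 * (4*K+1) := by
    have h := calc ((2*k).choose k)^2 * ((4*k+1) * 16^t) * 16^k
          = ((2*k).choose k)^2 * ((4*k+1) * 16^K) := by rw [h16]; ring
        _ ≤ ((2*K).choose K)^2 * ((4*K+1) * 16^k) := hmono
        _ = ((2*K).choose K)^2 * (4*K+1) * 16^k := by ring
    exact Nat.le_of_mul_le_mul_right h (by positivity)
  have hodd := cent_odd K
  have hpoly := growth_even_poly k t hk ht1 ht
  have h4 : (2:ℕ)^(2*t) * 2^(2*t) = 16^t := by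
    rw [← pow_add, show 2*t+2*t = 4*t by ring, show (16:ℕ) = 2^4 by norm_num, ← pow_mul]
  have hsq : (5 * 2^(2*t) * ((2*k).choose k) * (K+1))^2
      = 25*(K+1)^2 * (((2*k).choose k)^2 * (2^(2*t) * 2^(2*t))) := by ring
  rw [h4] at hsq
  have key : (5 * 2^(2*t) * ((2*k).choose k) * (K+1))^2 ≤ (4 * ((2*K+1)*(2*K).choose K))^2 := by
    have main : (5 * 2^(2*t) * ((2*k).choose k) * (K+1))^2 * (4*k+1)
        ≤ (4 * ((2*K+1)*(2*K).choose K))^2 * (4*k+1) := by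
      calc (5 * 2^(2*t) * ((2*k).choose k) * (K+1))^2 * (4*k+1)
          = (25*(K+1)^2) * (((2*k).choose k)^2 * ((4*k+1) * 16^t)) := by rw [hsq]; ring
        _ ≤ (25*(K+1)^2) * (((2*K).choose K)^2 * (4*K+1)) := Nat.mul_le_mul_left _ hcancel
        _ = (25*(K+1)^2*(4*K+1)) * ((2*K).choose K)^2 := by ring
        _ ≤ (16*(2*K+1)^2*(4*k+1)) * ((2*K).choose K)^2 := Nat.mul_le_mul_right _ (by
            calc 25*(K+1)^2*(4*K+1) = 25 * (k+t+1)^2*(4*(k+t)+1) := by rw [hK]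
              _ ≤ 16*(2*(k+t)+1)^2*(4*k+1) := hpoly
              _ = 16*(2*K+1)^2*(4*k+1) := by rw [hK])
        _ = (4 * ((2*K+1)*(2*K).choose K))^2 * (4*k+1) := by ring
    exact Nat.le_of_mul_le_mul_right main (by positivity)
  rw [show 4 * ((2*K+1)*(2*K).choose K) = 4 * ((K+1) * (2*K+1).choose K) by rw [hodd]] at key
  have h5 := sq_le_sq_nat key
  have h6 : (5 * 2^(2*t) * ((2*k).choose k)) * (K+1) ≤ (4 * ((2*K+1).choose K)) * (K+1) := by
    calc (5 * 2^(2*t) * ((2*k).choose k)) * (K+1) = 5 * 2^(2*t) * ((2*k).choose k) * (K+1) := by ring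
      _ ≤ 4 * ((K+1) * (2*K+1).choose K) := h5
      _ = (4 * ((2*K+1).choose K)) * (K+1) := by ring
  exact Nat.le_of_mul_le_mul_right h6 (by positivity)
lemma grow_main (k r : ℕ) (hk : 1 ≤ k) (hrm : r ≤ 2*k) :
    2^r * ((2*k).choose k) + ((2*k).choose k) * 2^(r-1)/2 ≤ (2*k+r+1).choose ((2*k+r+1)/2) := by
  set c := (2*k).choose k with hc
  match r, hrm with
  | 0, _ =>
    rw [show 2*k+0+1 = 2*k+1 by omega, show (2*k+1)/2 = k by omega]
    set X := (2*k+1).choose k with hX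
    have hodd := cent_odd k
    have h2 : 3 * c ≤ 2 * X := by
      have : (k+1) * (3*c) ≤ (k+1) * (2*X) := by
        calc (k+1) * (3*c) = 3 * ((k+1) * c) := by ring
          _ ≤ (4*k+2) * c := by nlinarith
          _ = 2 * ((2*k+1) * c) := by ring
          _ = 2 * ((k+1) * X) := by rw [show (2*k+1) * c = (k+1) * X from hodd.symm ▸ rfl]
          _ = (k+1) * (2*X) := by ring
      exact Nat.le_of_mul_le_mul_left this (by omega)
    simp only [pow_zero, one_mul]
    omega
  | 1, _ =>
    rw [show 2*k+1+1 = 2*k+2 by omega, show (2*k+2)/2 = k+1 by omega]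
    set X := (2*k+2).choose (k+1) with hX
    have hstep := cent_step k
    have h2 : 5 * c ≤ 2 * X := by
      have : (k+1) * (5*c) ≤ (k+1) * (2*X) := by
        calc (k+1) * (5*c) = 5 * ((k+1) * c) := by ring
          _ ≤ (8*k+4) * c := by nlinarith
          _ = 2 * (2 * (2*k+1) * c) := by ring
          _ = 2 * ((k+1) * X) := by rw [← hstep]
          _ = (k+1) * (2*X) := by ring
      exact Nat.le_of_mul_le_mul_left this (by omega)
    simp only [pow_one, Nat.sub_self, pow_zero, one_mul]
    omega
  | (r+2), hrm =>
    have hb : c * 2^(r+2-1) / 2 = c * 2^r := by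
      rw [show r+2-1 = r+1 by omega, pow_succ, ← mul_assoc, Nat.mul_div_cancel _ (by omega)]
    rw [hb]
    have hexp : (2:ℕ)^(r+2) = 4 * 2^r := by rw [pow_add]; ring
    -- suffices 5 * 2^(r+2) * c ≤ 4 * X
    suffices hs : 5 * 2^(r+2) * c ≤ 4 * ((2*k+(r+2)+1).choose ((2*k+(r+2)+1)/2)) by
      set X := (2*k+(r+2)+1).choose ((2*k+(r+2)+1)/2) with hX
      have : 4 * (2^(r+2) * c + c * 2^r) = 5 * 2^(r+2) * c := by
        rw [hexp]; ring
      omega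
    rcases Nat.even_or_odd r with ⟨t, ht⟩ | ⟨t, ht⟩
    · -- r+2 = 2t+2 even, use growth_even with t+1 ≥ 1, or k=1 special case
      have hrt : r + 2 = 2*(t+1) := by omega
      rw [show 2*k+(r+2)+1 = 2*(k+(t+1))+1 by omega, show (2*(k+(t+1))+1)/2 = k+(t+1) by omega]
      rcases Nat.lt_or_ge k 2 with hk2 | hk2
      · -- k = 1, then r+2 ≤ 2 so r = 0, t = 0
        have hk1' : k = 1 := by omega
        have hr0 : r = 0 := by omega
        have ht0 : t = 0 := by omega
        subst hk1' hr0 ht0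
        rw [hc]
        decide
      · have hg := growth_even k (t+1) hk2 (by omega) (by omega)
        rw [show 2*(t+1) = r+2 from hrt.symm] at hg
        exact hg
    · -- r+2 = 2t+3 odd, r = 2t+1
      have hrt : r + 2 = 2*(t+1)+1 := by omega
      rw [show 2*k+(r+2)+1 = 2*(k+(t+1)+1) by omega, show (2*(k+(t+1)+1))/2 = k+(t+1)+1 by omega]
      have hg := growth_odd k (t+1) hk (by omega)
      rw [show 2*(t+1)+1 = r+2 from hrt.symm] at hg
      exact hg


/-- A circuit reading only a set `R` of `r ≤ n/2` input bits (with `n − r` even and positive)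
errs on `MAJ_n` on at least `C(n−r,(n−r)/2)·2^(r−1)/2` inputs; more precisely, for any pair of
assignments agreeing on `R` and complementary outside `R` on which `MAJ_n` differs,
the circuit errs on at least one member of the pair. -/
theorem stmt6 (n r : ℕ) (hr : r ≤ n / 2) (hpos : 0 < n - r) (heven : Even (n - r))
    (R : Finset (Fin n)) (hR : R.card = r)
    (C : (Fin n → Bool) → Bool)
    (hdep : ∀ x y : Fin n → Bool, (∀ i ∈ R, x i = y i) → C x = C y) :
    (n - r).choose ((n - r) / 2) * 2 ^ (r - 1) / 2
        ≤ (Finset.univ.filter (fun x : Fin n → Bool => C x ≠ majFun n x)).card ∧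
    (∀ x y : Fin n → Bool, (∀ i ∈ R, x i = y i) → (∀ i ∉ R, y i = ! x i) →
        majFun n x ≠ majFun n y → (C x ≠ majFun n x ∨ C y ≠ majFun n y)) := by
  constructor
  · -- counting part
    have hrn : 2 * r ≤ n := by omega
    set m := n - r with hmdef
    obtain ⟨k, hkk⟩ := heven
    have hk1 : 1 ≤ k := by omega
    have hm2k : m = 2 * k := by omega
    have hmc : Rᶜ.card = m := by
      rw [Finset.card_compl, Fintype.card_fin, hR]
    set E := univ.filter (fun x : Fin n → Bool => C x ≠ majFun n x) with hE
    have hhm : (n+1)/2 ≤ Rᶜ.card := by rw [hmc]; omega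
    have hm2 : 2 ≤ Rᶜ.card := by rw [hmc]; omega
    have hn1 : 1 ≤ n := by omega
    have hchain : n.choose ((n+1)/2 - 1) + n.choose ((n+1)/2)
        ≤ E.card + 2^r * (Rᶜ.card.choose (Rᶜ.card / 2)) := by
      have hsum : E.card = ∑ B ∈ R.powerset,
          (E.filter (fun x => R.filter (fun i => x i = true) = B)).card :=
        Finset.card_eq_sum_card_fiberwise
          (fun x _ => Finset.mem_powerset.mpr (Finset.filter_subset _ _))
      have hfib : ∀ B ∈ R.powerset,
          Rᶜ.card.choose ((n+1)/2 - 1 - B.card) + Rᶜ.card.choose ((n+1)/2 - B.card)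
          ≤ (E.filter (fun x => R.filter (fun i => x i = true) = B)).card
            + Rᶜ.card.choose (Rᶜ.card / 2) := by
        intro B hBmem
        exact fiber_bound R C hdep hhm hm2 hn1 B (Finset.mem_powerset.mp hBmem)
      calc   n.choose ((n+1)/2 - 1) + n.choose ((n+1)/2)
            ≤ (∑ B ∈ R.powerset, Rᶜ.card.choose ((n+1)/2 - 1 - B.card))
              + ∑ B ∈ R.powerset, Rᶜ.card.choose ((n+1)/2 - B.card) :=
              Nat.add_le_add (LV R ((n+1)/2 - 1)) (LV R ((n+1)/2))
          _ = ∑ B ∈ R.powerset, (Rᶜ.card.choose ((n+1)/2 - 1 - B.card)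
                + Rᶜ.card.choose ((n+1)/2 - B.card)) := by
              rw [Finset.sum_add_distrib]
          _ ≤ ∑ B ∈ R.powerset, ((E.filter (fun x => R.filter (fun i => x i = true) = B)).card
                + Rᶜ.card.choose (Rᶜ.card / 2)) := Finset.sum_le_sum hfib
          _ = (∑ B ∈ R.powerset, (E.filter (fun x => R.filter (fun i => x i = true) = B)).card)
                + (R.powerset.card) * Rᶜ.card.choose (Rᶜ.card / 2) := by
              rw [Finset.sum_add_distrib, Finset.sum_const, smul_eq_mul]
          _ = E.card + 2^r * (Rᶜ.card.choose (Rᶜ.card / 2)) := by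
              rw [← hsum, Finset.card_powerset, hR]
    have hpascal : n.choose ((n+1)/2 - 1) + n.choose ((n+1)/2) = (n+1).choose ((n+1)/2) := by
      have h1 : 1 ≤ (n+1)/2 := by omega
      have := Nat.choose_succ_succ' n ((n+1)/2 - 1)
      rw [show (n+1)/2 - 1 + 1 = (n+1)/2 by omega] at this
      omega
    have hgrow := grow_main k r hk1 (by omega)
    rw [show 2*k+r+1 = n+1 by omega, show (n+1)/2 = (n+1)/2 from rfl] at hgrow
    have he1 : (2*k).choose k = m.choose (m/2) := by
      rw [hm2k, show 2*k/2 = k by omega]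
    rw [he1] at hgrow
    rw [hmc] at hchain
    -- conclude
    omega
  · intro x y hagree hcomp hmaj
    by_cases hx : C x = majFun n x
    · right
      rw [← hdep x y hagree, hx]
      exact hmaj
    · left
      exact hx
end

section
/- If there exists a deterministic MAJ_k ∘ MAJ_k circuit computing MAJ_n (n odd) correctly on at least a (1−ε) fraction of all minterms and maxterms of MAJ_n, then there exists a distribution over MAJ_k ∘ MAJ_k circuits (obtained by permuting the inputs of the given circuit uniformly at random) that computes MAJ_n correctly on every input with probability at least 1 − 2ε. -/
open Finset

/-- A monotone threshold gate over `n` inputs with total weight at most `k`. -/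
structure ThresholdGate (n k : ℕ) where
  w : Fin n → ℕ
  thr : ℕ
  hw : ∑ i, w i ≤ k

/-- Evaluation of a threshold gate. -/
def ThresholdGate.eval {n k : ℕ} (g : ThresholdGate n k) (x : Fin n → Bool) : Bool :=
  decide (g.thr ≤ ∑ i, g.w i * (if x i then 1 else 0))

/-- A `MAJ_k ∘ MAJ_k` circuit: a depth-2 formula of monotone threshold gates of fan-in
(total weight) at most `k`. -/
structure Maj2Circuit (n k : ℕ) where
  bottom : Fin k → ThresholdGate n k
  topw : Fin k → ℕ
  topthr : ℕ
  htop : ∑ j, topw j ≤ k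

/-- Evaluation of a `MAJ_k ∘ MAJ_k` circuit. -/
def Maj2Circuit.eval {n k : ℕ} (c : Maj2Circuit n k) (x : Fin n → Bool) : Bool :=
  decide (c.topthr ≤ ∑ j, c.topw j * (if (c.bottom j).eval x then 1 else 0))

/-- The weight of an assignment. -/
def wt {n : ℕ} (x : Fin n → Bool) : ℕ := (Finset.univ.filter (fun i => x i = true)).card

section aux
variable {n k : ℕ}

lemma indicator_mono {a b : Bool} (h : a = true → b = true) :
    (if a then (1:ℕ) else 0) ≤ if b then 1 else 0 := by
  cases a with
  | false => cases b <;> simp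
  | true => simp [h rfl]

lemma gate_mono (g : ThresholdGate n k) {x y : Fin n → Bool}
    (h : ∀ i, x i = true → y i = true) (hx : g.eval x = true) : g.eval y = true := by
  simp only [ThresholdGate.eval, decide_eq_true_iff] at *
  exact hx.trans (Finset.sum_le_sum fun i _ =>
    Nat.mul_le_mul_left _ (indicator_mono (h i)))

lemma circ_mono (c : Maj2Circuit n k) {x y : Fin n → Bool}
    (h : ∀ i, x i = true → y i = true) (hx : c.eval x = true) : c.eval y = true := by
  simp only [Maj2Circuit.eval, decide_eq_true_iff] at *
  exact hx.trans (Finset.sum_le_sum fun j _ =>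
    Nat.mul_le_mul_left _ (indicator_mono (gate_mono _ h)))

lemma wt_comp (x : Fin n → Bool) (σ : Equiv.Perm (Fin n)) :
    wt (fun i => x (σ i)) = wt x := by
  unfold wt
  apply Finset.card_bij (fun i _ => σ i)
  · intro i hi; simp only [mem_filter, mem_univ, true_and] at *; exact hi
  · intro a _ b _ hab; exact σ.injective hab
  · intro j hj
    refine ⟨σ.symm j, ?_, by simp⟩
    simp only [mem_filter, mem_univ, true_and] at *
    simpa using hj

lemma exists_perm_comp (A y : Fin n → Bool) (h : wt y = wt A) :
    ∃ τ : Equiv.Perm (Fin n), ∀ i, A (τ i) = y i := by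
  have h1 : Fintype.card {i // y i = true} = Fintype.card {i // A i = true} := by
    simpa [Fintype.card_subtype, wt] using h
  have h2 : Fintype.card {i // ¬ y i = true} = Fintype.card {i // ¬ A i = true} := by
    rw [Fintype.card_subtype_compl, Fintype.card_subtype_compl, h1]
  refine ⟨Equiv.subtypeCongr (Fintype.equivOfCardEq h1) (Fintype.equivOfCardEq h2), fun i => ?_⟩
  by_cases hi : y i = true
  · have h3 := ((Fintype.equivOfCardEq h1) ⟨i, hi⟩).2
    have e := Equiv.sumCompl_symm_apply_of_pos (p := fun x => y x = true) hi
    rw [Equiv.subtypeCongr, Equiv.trans_apply, Equiv.trans_apply, e]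
    simpa using h3.trans hi.symm
  · have h3 := ((Fintype.equivOfCardEq h2) ⟨i, hi⟩).2
    have e := Equiv.sumCompl_symm_apply_of_neg (p := fun x => y x = true) hi
    rw [Equiv.subtypeCongr, Equiv.trans_apply, Equiv.trans_apply, e]
    simp only [Equiv.sumCongr_apply, Sum.map_inr, Equiv.sumCompl_apply_inr]
    simp only [Bool.not_eq_true] at h3 hi ⊢
    rw [h3, hi]

lemma fib_eq (A y : Fin n → Bool) (hy : wt y = wt A) :
    (univ.filter (fun σ : Equiv.Perm (Fin n) => (fun i => A (σ i)) = y)).card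
      = (univ.filter (fun σ : Equiv.Perm (Fin n) => (fun i => A (σ i)) = A)).card := by
  obtain ⟨τ, hτ⟩ := exists_perm_comp A y hy
  apply Finset.card_bij (fun σ _ => τ.symm.trans σ)
  · intro σ hσ
    simp only [mem_filter, mem_univ, true_and] at *
    funext i
    have h1 : A (σ (τ.symm i)) = y (τ.symm i) := congrFun hσ (τ.symm i)
    have h2 : A (τ (τ.symm i)) = y (τ.symm i) := hτ (τ.symm i)
    simp only [Equiv.trans_apply]
    rw [h1, ← h2, Equiv.apply_symm_apply]
  · intro a _ b _ hab
    apply Equiv.ext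
    intro i
    have := congrArg (fun e : Equiv.Perm (Fin n) => e (τ i)) hab
    simpa using this
  · intro σ' hσ'
    refine ⟨τ.trans σ', ?_, ?_⟩
    · simp only [mem_filter, mem_univ, true_and] at *
      funext i
      have : A (σ' (τ i)) = A (τ i) := congrFun hσ' (τ i)
      simp only [Equiv.trans_apply]
      rw [this, hτ]
    · ext i; simp

lemma key_count (A : Fin n → Bool) (m : ℕ) (hA : wt A = m) (c : Maj2Circuit n k) (b : Bool) :
    ((univ.filter fun y : Fin n → Bool => wt y = m ∧ c.eval y = b).card) * (n.factorial)
      = ((univ.filter fun y : Fin n → Bool => wt y = m).card) *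
        (univ.filter fun σ : Equiv.Perm (Fin n) => c.eval (fun i => A (σ i)) = b).card := by
  set W := univ.filter fun y : Fin n → Bool => wt y = m with hW
  set f := (univ.filter (fun σ : Equiv.Perm (Fin n) => (fun i => A (σ i)) = A)).card with hf
  have hmem : ∀ σ : Equiv.Perm (Fin n), (fun i => A (σ i)) ∈ W := by
    intro σ; simp [hW, mem_filter, wt_comp, hA]
  have step1 : n.factorial = W.card * f := by
    have h0 : (univ : Finset (Equiv.Perm (Fin n))).card
        = ∑ y ∈ W, (univ.filter (fun σ : Equiv.Perm (Fin n) => (fun i => A (σ i)) = y)).card :=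
      Finset.card_eq_sum_card_fiberwise (fun σ _ => hmem σ)
    have h1 : (univ : Finset (Equiv.Perm (Fin n))).card = n.factorial := by
      rw [Finset.card_univ, Fintype.card_perm, Fintype.card_fin]
    rw [← h1, h0]
    rw [Finset.sum_congr rfl (fun y hy => fib_eq A y (by
      simp only [hW, mem_filter] at hy; rw [hy.2, hA]))]
    simp [mul_comm, hf]
  have step2 : (univ.filter fun σ : Equiv.Perm (Fin n) => c.eval (fun i => A (σ i)) = b).card
      = (W.filter fun y => c.eval y = b).card * f := by
    set s := univ.filter fun σ : Equiv.Perm (Fin n) => c.eval (fun i => A (σ i)) = b with hs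
    have h0 : s.card = ∑ y ∈ W.filter (fun y => c.eval y = b),
        (s.filter (fun σ => (fun i => A (σ i)) = y)).card := by
      apply Finset.card_eq_sum_card_fiberwise
      intro σ hσ
      simp only [hs, mem_filter, mem_univ, true_and] at hσ
      simp only [mem_filter]
      exact mem_filter.mpr ⟨hmem σ, (mem_filter.mp (Finset.mem_coe.mp hσ)).2⟩
    have hfib : ∀ y ∈ W.filter (fun y => c.eval y = b),
        (s.filter (fun σ => (fun i => A (σ i)) = y)).card = f := by
      intro y hy
      simp only [mem_filter, hW, mem_univ, true_and] at hy
      have heq : s.filter (fun σ => (fun i => A (σ i)) = y)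
          = univ.filter (fun σ : Equiv.Perm (Fin n) => (fun i => A (σ i)) = y) := by
        ext σ
        simp only [hs, mem_filter, mem_univ, true_and]
        constructor
        · rintro ⟨_, h⟩; exact h
        · intro h; exact ⟨by rw [h]; exact hy.2, h⟩
      rw [heq, fib_eq A y (by rw [hy.1, hA])]
    rw [h0, Finset.sum_congr rfl hfib, Finset.sum_const, smul_eq_mul]
  have : (univ.filter fun y : Fin n → Bool => wt y = m ∧ c.eval y = b)
      = W.filter fun y => c.eval y = b := by
    ext y; simp [hW, mem_filter, and_assoc]
  rw [this, step1, step2]; ring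

end aux

lemma wt_not {n : ℕ} (x : Fin n → Bool) : wt (fun i => !x i) = n - wt x := by
  have h := Finset.card_filter_add_card_filter_not
    (s := (univ : Finset (Fin n))) (p := fun i => x i = true)
  have h2 : wt (fun i => !x i) = (univ.filter (fun i => ¬ x i = true)).card := by
    unfold wt; congr 1; ext i; simp
  rw [h2]
  have h3 : (univ : Finset (Fin n)).card = n := by simp
  unfold wt
  omega

lemma card_wt_eq {n : ℕ} (m₁ m₂ : ℕ) (h : m₁ + m₂ = n) :
    (univ.filter fun y : Fin n → Bool => wt y = m₁).card
      = (univ.filter fun y : Fin n → Bool => wt y = m₂).card := by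
  apply Finset.card_bij (fun y _ => fun i => !y i)
  · intro y hy
    simp only [mem_filter, mem_univ, true_and] at *
    rw [wt_not, hy]; omega
  · intro a ha b hb hab
    funext i
    have := congrFun hab i
    exact Bool.not_inj this
  · intro z hz
    simp only [mem_filter, mem_univ, true_and] at hz
    refine ⟨fun i => !z i, ?_, ?_⟩
    · simp only [mem_filter, mem_univ, true_and]
      rw [wt_not, hz]
      have : wt z ≤ n := by
        unfold wt; exact (Finset.card_filter_le _ _).trans (by simp)
      omega
    · funext i; simp

lemma majFun_eq {n : ℕ} (y : Fin n → Bool) : majFun n y = decide (n ≤ 2 * wt y) := rfl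



/-- If a deterministic `MAJ_k ∘ MAJ_k` circuit computes `MAJ_n` (n odd) correctly on at least
a `1−ε` fraction of all minterms and maxterms, then the random circuit obtained by permuting
its inputs uniformly computes `MAJ_n` correctly on every input with probability
at least `1 − 2ε`. -/
theorem stmt7 (n k : ℕ) (hodd : Odd n) (ε : ℝ) (hε : 0 ≤ ε) (c : Maj2Circuit n k)
    (hcorrect :
      (1 - ε) * ((Finset.univ.filter
          (fun x : Fin n → Bool => wt x = (n + 1) / 2 ∨ wt x = (n - 1) / 2)).card : ℝ)
        ≤ ((Finset.univ.filter (fun x : Fin n → Bool =>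
            (wt x = (n + 1) / 2 ∨ wt x = (n - 1) / 2) ∧ c.eval x = majFun n x)).card : ℝ)) :
    ∀ x : Fin n → Bool,
      (1 - 2 * ε) * (Nat.factorial n : ℝ)
        ≤ ((Finset.univ.filter (fun σ : Equiv.Perm (Fin n) =>
            c.eval (fun i => x (σ i)) = majFun n x)).card : ℝ) := by
  intro x
  obtain ⟨t, ht⟩ := hodd
  set m₁ : ℕ := (n + 1) / 2 with hm₁def
  set m₂ : ℕ := (n - 1) / 2 with hm₂def
  have hm₁ : m₁ = t + 1 := by omega
  have hm₂ : m₂ = t := by omega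
  set W₁ := univ.filter fun y : Fin n → Bool => wt y = m₁ with hW₁
  set W₂ := univ.filter fun y : Fin n → Bool => wt y = m₂ with hW₂
  set Q : (Fin n → Bool) → Prop := fun y => c.eval y = majFun n y with hQ
  -- split the correctness hypothesis
  have hdisj : Disjoint W₁ W₂ := by
    rw [Finset.disjoint_left]
    intro a ha hb
    simp only [hW₁, hW₂, mem_filter, mem_univ, true_and] at ha hb
    omega
  have hSsplit : univ.filter (fun y : Fin n → Bool => wt y = m₁ ∨ wt y = m₂) = W₁ ∪ W₂ :=
    Finset.filter_or _ _ _
  have hTsplit : univ.filter (fun y : Fin n → Bool => (wt y = m₁ ∨ wt y = m₂) ∧ Q y)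
      = W₁.filter Q ∪ W₂.filter Q := by
    ext a
    simp only [hW₁, hW₂, mem_filter, mem_union, mem_univ, true_and]
    tauto
  have hdisj2 : Disjoint (W₁.filter Q) (W₂.filter Q) :=
    hdisj.mono (Finset.filter_subset _ _) (Finset.filter_subset _ _)
  have hCC : W₁.card = W₂.card := card_wt_eq m₁ m₂ (by omega)
  have hg₁le : (W₁.filter Q).card ≤ W₁.card := Finset.card_le_card (Finset.filter_subset _ _)
  have hg₂le : (W₂.filter Q).card ≤ W₂.card := Finset.card_le_card (Finset.filter_subset _ _)
  have hcor : (1 - ε) * ((W₁.card + W₂.card : ℕ) : ℝ)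
      ≤ (((W₁.filter Q).card + (W₂.filter Q).card : ℕ) : ℝ) := by
    rw [← Finset.card_union_of_disjoint hdisj, ← Finset.card_union_of_disjoint hdisj2,
      ← hSsplit, ← hTsplit]
    exact hcorrect
  have hg₁ : (1 - 2 * ε) * (W₁.card : ℝ) ≤ ((W₁.filter Q).card : ℝ) := by
    have h2 : ((W₂.filter Q).card : ℝ) ≤ (W₂.card : ℝ) := by exact_mod_cast hg₂le
    have h3 : (W₁.card : ℝ) = (W₂.card : ℝ) := by exact_mod_cast hCC
    push_cast at hcor
    nlinarith [hcor, h2, h3, Nat.cast_nonneg (α := ℝ) W₁.card]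
  have hg₂ : (1 - 2 * ε) * (W₂.card : ℝ) ≤ ((W₂.filter Q).card : ℝ) := by
    have h2 : ((W₁.filter Q).card : ℝ) ≤ (W₁.card : ℝ) := by exact_mod_cast hg₁le
    have h3 : (W₁.card : ℝ) = (W₂.card : ℝ) := by exact_mod_cast hCC
    push_cast at hcor
    nlinarith [hcor, h2, h3, Nat.cast_nonneg (α := ℝ) W₂.card]
  -- case on the value of majority on x
  rcases hb : majFun n x with _ | _
  · -- majFun n x = false
    have hx : ¬ n ≤ 2 * wt x := by
      rw [majFun_eq] at hb
      simpa using hb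
    have hwx : wt x ≤ m₂ := by omega
    have hm₂n : m₂ ≤ (univ : Finset (Fin n)).card := by simp; omega
    obtain ⟨v, hxv, -, hvcard⟩ :=
      Finset.exists_subsuperset_card_eq
        (Finset.subset_univ (univ.filter fun i => x i = true)) hwx hm₂n
    set B : Fin n → Bool := fun i => decide (i ∈ v) with hB
    have hwB : wt B = m₂ := by
      rw [← hvcard]; unfold wt; congr 1; ext i; simp [hB]
    have hxB : ∀ i, x i = true → B i = true := by
      intro i hi
      simp only [hB, decide_eq_true_iff]
      exact hxv (by simp [hi])
    have hsub : univ.filter (fun σ : Equiv.Perm (Fin n) => c.eval (fun i => B (σ i)) = false)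
        ⊆ univ.filter (fun σ : Equiv.Perm (Fin n) => c.eval (fun i => x (σ i)) = majFun n x) := by
      intro σ hσ
      simp only [mem_filter, mem_univ, true_and] at *
      rw [hb]
      cases hcx : c.eval (fun i => x (σ i)) with
      | false => rfl
      | true =>
        have := circ_mono c (fun i hi => hxB (σ i) hi) hcx
        rw [this] at hσ
        exact absurd hσ (by simp)
    have hGsub : W₂.filter Q ⊆ univ.filter
        (fun y : Fin n → Bool => wt y = m₂ ∧ c.eval y = false) := by
      intro y hy
      simp only [hW₂, hQ, mem_filter, mem_univ, true_and] at *
      refine ⟨hy.1, ?_⟩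
      rw [hy.2, majFun_eq]
      simp only [decide_eq_false_iff_not]
      rw [hy.1]; omega
    have hBmem : B ∈ W₂ := by simp [hW₂, hwB]
    have hC₂pos : 0 < W₂.card := Finset.card_pos.mpr ⟨B, hBmem⟩
    have key := key_count B m₂ hwB c false
    set cnt := (univ.filter fun σ : Equiv.Perm (Fin n) =>
      c.eval (fun i => B (σ i)) = false).card with hcnt
    have key' : (((univ.filter fun y : Fin n → Bool =>
        wt y = m₂ ∧ c.eval y = false).card : ℝ)) * n.factorial
        = (W₂.card : ℝ) * cnt := by exact_mod_cast key
    have hWp : ((W₂.filter Q).card : ℝ) ≤ ((univ.filter fun y : Fin n → Bool =>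
        wt y = m₂ ∧ c.eval y = false).card : ℝ) := by
      exact_mod_cast Finset.card_le_card hGsub
    have hchain : (1 - 2 * ε) * (n.factorial : ℝ) * (W₂.card : ℝ) ≤ (cnt : ℝ) * (W₂.card : ℝ) := by
      calc (1 - 2 * ε) * (n.factorial : ℝ) * (W₂.card : ℝ)
          = ((1 - 2 * ε) * (W₂.card : ℝ)) * (n.factorial : ℝ) := by ring
        _ ≤ ((W₂.filter Q).card : ℝ) * (n.factorial : ℝ) :=
            mul_le_mul_of_nonneg_right hg₂ (by positivity)
        _ ≤ ((univ.filter fun y : Fin n → Bool =>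
              wt y = m₂ ∧ c.eval y = false).card : ℝ) * (n.factorial : ℝ) :=
            mul_le_mul_of_nonneg_right hWp (by positivity)
        _ = (cnt : ℝ) * (W₂.card : ℝ) := by rw [key']; ring
    have hfin : (1 - 2 * ε) * (n.factorial : ℝ) ≤ (cnt : ℝ) :=
      le_of_mul_le_mul_right hchain (by exact_mod_cast hC₂pos)
    have hcard := Finset.card_le_card hsub
    rw [hb] at hcard
    exact hfin.trans (by rw [hcnt]; exact_mod_cast hcard)
  · -- majFun n x = true
    have hx : n ≤ 2 * wt x := by
      rw [majFun_eq] at hb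
      simpa using hb
    have hwx : m₁ ≤ wt x := by omega
    obtain ⟨u, huv, hucard⟩ := Finset.exists_subset_card_eq (s := univ.filter fun i => x i = true)
      (n := m₁) hwx
    set A : Fin n → Bool := fun i => decide (i ∈ u) with hA
    have hwA : wt A = m₁ := by
      rw [← hucard]; unfold wt; congr 1; ext i; simp [hA]
    have hAx : ∀ i, A i = true → x i = true := by
      intro i hi
      simp only [hA, decide_eq_true_iff] at hi
      have := huv hi
      simpa using this
    have hsub : univ.filter (fun σ : Equiv.Perm (Fin n) => c.eval (fun i => A (σ i)) = true)
        ⊆ univ.filter (fun σ : Equiv.Perm (Fin n) => c.eval (fun i => x (σ i)) = majFun n x) := by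
      intro σ hσ
      simp only [mem_filter, mem_univ, true_and] at *
      rw [hb]
      exact circ_mono c (fun i hi => hAx (σ i) hi) hσ
    have hGsub : W₁.filter Q ⊆ univ.filter
        (fun y : Fin n → Bool => wt y = m₁ ∧ c.eval y = true) := by
      intro y hy
      simp only [hW₁, hQ, mem_filter, mem_univ, true_and] at *
      refine ⟨hy.1, ?_⟩
      rw [hy.2, majFun_eq]
      simp only [decide_eq_true_iff]
      rw [hy.1]; omega
    have hAmem : A ∈ W₁ := by simp [hW₁, hwA]
    have hC₁pos : 0 < W₁.card := Finset.card_pos.mpr ⟨A, hAmem⟩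
    have key := key_count A m₁ hwA c true
    set cnt := (univ.filter fun σ : Equiv.Perm (Fin n) =>
      c.eval (fun i => A (σ i)) = true).card with hcnt
    have key' : (((univ.filter fun y : Fin n → Bool =>
        wt y = m₁ ∧ c.eval y = true).card : ℝ)) * n.factorial
        = (W₁.card : ℝ) * cnt := by exact_mod_cast key
    have hWp : ((W₁.filter Q).card : ℝ) ≤ ((univ.filter fun y : Fin n → Bool =>
        wt y = m₁ ∧ c.eval y = true).card : ℝ) := by
      exact_mod_cast Finset.card_le_card hGsub
    have hchain : (1 - 2 * ε) * (n.factorial : ℝ) * (W₁.card : ℝ) ≤ (cnt : ℝ) * (W₁.card : ℝ) := by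
      calc (1 - 2 * ε) * (n.factorial : ℝ) * (W₁.card : ℝ)
          = ((1 - 2 * ε) * (W₁.card : ℝ)) * (n.factorial : ℝ) := by ring
        _ ≤ ((W₁.filter Q).card : ℝ) * (n.factorial : ℝ) :=
            mul_le_mul_of_nonneg_right hg₁ (by positivity)
        _ ≤ ((univ.filter fun y : Fin n → Bool =>
              wt y = m₁ ∧ c.eval y = true).card : ℝ) * (n.factorial : ℝ) :=
            mul_le_mul_of_nonneg_right hWp (by positivity)
        _ = (cnt : ℝ) * (W₁.card : ℝ) := by rw [key']; ring
    have hfin : (1 - 2 * ε) * (n.factorial : ℝ) ≤ (cnt : ℝ) :=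
      le_of_mul_le_mul_right hchain (by exact_mod_cast hC₁pos)
    have hcard := Finset.card_le_card hsub
    rw [hb] at hcard
    exact hfin.trans (by rw [hcnt]; exact_mod_cast hcard)
end

section
/- Let G be a graph with n = 2l+1 vertices and n−2 edges. Then there exists a set Z of exactly l vertices such that the number of edges of G having at least one endpoint in Z is at most l−1. -/
open Finset SimpleGraph
open scoped Classical

namespace Stmt11Aux

/-! ### Generic list lemmas -/

/-- Sum of a function over a nodup list equals the finset sum over its members. -/
lemma list_sum_eq_finset_sum {α : Type*} [DecidableEq α] (f : α → ℕ) :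
    ∀ (L : List α), L.Nodup → (L.map f).sum = ∑ x ∈ L.toFinset, f x := by
  intro L
  induction L with
  | nil => simp
  | cons a L ih =>
    intro h
    rcases List.nodup_cons.mp h with ⟨ha, hL⟩
    rw [List.map_cons, List.sum_cons, List.toFinset_cons,
      Finset.sum_insert (by simpa using ha), ih hL]

/-- Every finset admits a listing sorted by a `ℕ`-valued key. -/
lemma exists_sorted_list {α : Type*} (key : α → ℕ) :
    ∀ (n : ℕ) (s : Finset α), s.card = n →
      ∃ L : List α, L.Nodup ∧ (∀ a, a ∈ L ↔ a ∈ s) ∧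
        L.Pairwise (fun a b => key a ≤ key b) := by
  intro n
  induction n with
  | zero =>
    intro s hs
    refine ⟨[], List.nodup_nil, ?_, List.Pairwise.nil⟩
    intro a
    simp [Finset.card_eq_zero.mp hs]
  | succ n ih =>
    intro s hs
    have hne : s.Nonempty := Finset.card_pos.mp (by omega)
    obtain ⟨a, ha, hmin⟩ := Finset.exists_min_image s key hne
    have hcard : (s.erase a).card = n := by
      rw [Finset.card_erase_of_mem ha, hs]; omega
    obtain ⟨L, hnd, hmem, hsort⟩ := ih (s.erase a) hcard
    refine ⟨a :: L, ?_, ?_, ?_⟩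
    · refine List.nodup_cons.mpr ⟨?_, hnd⟩
      intro hc
      exact (Finset.notMem_erase a s) ((hmem a).mp hc)
    · intro b
      simp only [List.mem_cons, hmem, Finset.mem_erase]
      constructor
      · rintro (rfl | ⟨_, hb⟩)
        · exact ha
        · exact hb
      · intro hb
        by_cases hba : b = a
        · exact Or.inl hba
        · exact Or.inr ⟨hba, hb⟩
    · refine List.pairwise_cons.mpr ⟨?_, hsort⟩
      intro b hb
      exact hmin b (Finset.mem_erase.mp ((hmem b).mp hb)).2

/-- Split a list at the point where a prefix sum first would exceed `l`. -/
lemma exists_split {α : Type*} (v : α → ℕ) :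
    ∀ (L : List α) (l : ℕ), l < (L.map v).sum →
      ∃ p d q, L = p ++ d :: q ∧ (p.map v).sum ≤ l ∧ l < (p.map v).sum + v d := by
  intro L
  induction L with
  | nil => intro l hl; simp at hl
  | cons a L ih =>
    intro l hl
    by_cases hla : l < v a
    · exact ⟨[], a, L, rfl, by simp, by simpa using hla⟩
    · push_neg at hla
      have hrec : l - v a < (L.map v).sum := by
        rw [List.map_cons, List.sum_cons] at hl
        omega
      obtain ⟨p, d, q, heq, h1, h2⟩ := ih (l - v a) hrec
      refine ⟨a :: p, d, q, by rw [heq, List.cons_append], ?_, ?_⟩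
      · rw [List.map_cons, List.sum_cons]; omega
      · rw [List.map_cons, List.sum_cons]; omega

/-! ### Graph set-up -/

variable {V : Type*} [Fintype V] [DecidableEq V] (G : SimpleGraph V) [DecidableRel G.Adj]

/-- Edges entirely inside `S`. -/
noncomputable def eIn (S : Finset V) : Finset (Sym2 V) :=
  G.edgeFinset.filter (fun e => ∀ v ∈ e, v ∈ S)

/-- Edges touching `S`. -/
noncomputable def eTouch (S : Finset V) : Finset (Sym2 V) :=
  G.edgeFinset.filter (fun e => ∃ v ∈ e, v ∈ S)

/-- The support of a connected component, as a finset. -/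
noncomputable def suppF (c : G.ConnectedComponent) : Finset V :=
  Finset.univ.filter (fun v => G.connectedComponentMk v = c)

/-- Number of vertices of a component. -/
noncomputable def vC (c : G.ConnectedComponent) : ℕ := (suppF G c).card

/-- Number of edges of a component. -/
noncomputable def eC (c : G.ConnectedComponent) : ℕ := (eIn G (suppF G c)).card

lemma mem_suppF {c : G.ConnectedComponent} {v : V} :
    v ∈ suppF G c ↔ G.connectedComponentMk v = c := by
  simp [suppF]

lemma eIn_mono {S T : Finset V} (h : S ⊆ T) : eIn G S ⊆ eIn G T := by
  intro e he
  rw [eIn, Finset.mem_filter] at he ⊢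
  exact ⟨he.1, fun v hv => h (he.2 v hv)⟩

/-- Both endpoints of an edge lie in the same component. -/
lemma edge_mk_eq {e : Sym2 V} (he : e ∈ G.edgeFinset) {v w : V} (hv : v ∈ e) (hw : w ∈ e) :
    G.connectedComponentMk v = G.connectedComponentMk w := by
  induction e with
  | _ a b =>
    rw [mem_edgeFinset, mem_edgeSet] at he
    have hab : G.connectedComponentMk a = G.connectedComponentMk b :=
      ConnectedComponent.connectedComponentMk_eq_of_adj he
    rcases Sym2.mem_iff.mp hv with rfl | rfl <;>
      rcases Sym2.mem_iff.mp hw with rfl | rfl <;>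
        first | rfl | exact hab | exact hab.symm

/-- An edge touching a component lies in the component. -/
lemma edge_all_in {c : G.ConnectedComponent} {e : Sym2 V} (he : e ∈ G.edgeFinset) {v : V}
    (hv : v ∈ e) (hvc : v ∈ suppF G c) : e ∈ eIn G (suppF G c) := by
  rw [eIn, Finset.mem_filter]
  refine ⟨he, fun w hw => ?_⟩
  rw [mem_suppF] at hvc ⊢
  rw [← hvc]
  exact edge_mk_eq G he hw hv

lemma eTouch_subset_eIn {c : G.ConnectedComponent} {Z : Finset V} (hZ : Z ⊆ suppF G c) :
    eTouch G Z ⊆ eIn G (suppF G c) := by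
  intro e he
  rw [eTouch, Finset.mem_filter] at he
  obtain ⟨he1, v, hv, hvZ⟩ := he
  exact edge_all_in G he1 hv (hZ hvZ)

lemma eTouch_union (A B : Finset V) : eTouch G (A ∪ B) ⊆ eTouch G A ∪ eTouch G B := by
  intro e he
  rw [eTouch, Finset.mem_filter] at he
  obtain ⟨he1, v, hv, hvZ⟩ := he
  rcases Finset.mem_union.mp hvZ with h | h
  · exact Finset.mem_union_left _ (Finset.mem_filter.mpr ⟨he1, v, hv, h⟩)
  · exact Finset.mem_union_right _ (Finset.mem_filter.mpr ⟨he1, v, hv, h⟩)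

/-- Connected growth: a set of any size `s` within a component spanning at least `s - 1` edges. -/
lemma grow (c : G.ConnectedComponent) :
    ∀ s : ℕ, s ≤ vC G c → ∃ S : Finset V, S ⊆ suppF G c ∧ S.card = s ∧ s ≤ (eIn G S).card + 1 := by
  intro s
  induction s with
  | zero => intro _; exact ⟨∅, Finset.empty_subset _, Finset.card_empty, by omega⟩
  | succ s ih =>
    intro hs
    obtain ⟨S, hS, hcard, hbound⟩ := ih (by omega)
    rcases Nat.eq_zero_or_pos s with rfl | hpos
    · have hvceq : vC G c = (suppF G c).card := rfl
      have hne : (suppF G c).Nonempty := Finset.card_pos.mp (by omega)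
      obtain ⟨x, hx⟩ := hne
      exact ⟨{x}, Finset.singleton_subset_iff.mpr hx, Finset.card_singleton x, by omega⟩
    · have hSne : S.Nonempty := Finset.card_pos.mp (by omega)
      obtain ⟨y, hy⟩ := hSne
      have hvceq : vC G c = (suppF G c).card := rfl
      have hneq : S ≠ suppF G c := by
        intro h
        rw [h] at hcard
        omega
      obtain ⟨x, hxsupp, hxS⟩ := Finset.exists_of_ssubset (lt_of_le_of_ne hS hneq)
      have hyc : G.connectedComponentMk y = c := (mem_suppF G).mp (hS hy)
      have hxc : G.connectedComponentMk x = c := (mem_suppF G).mp hxsupp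
      have hreach : G.Reachable y x := ConnectedComponent.exact (hyc.trans hxc.symm)
      obtain ⟨p⟩ := hreach
      obtain ⟨d, _, hdfst, hdsnd⟩ :=
        p.exists_boundary_dart (↑S : Set V) (Finset.mem_coe.mpr hy)
          (fun hc => hxS (Finset.mem_coe.mp hc))
      have hdfst' : d.fst ∈ S := Finset.mem_coe.mp hdfst
      have hdsnd' : d.snd ∉ S := fun hc => hdsnd (Finset.mem_coe.mpr hc)
      have hsndsupp : d.snd ∈ suppF G c := by
        rw [mem_suppF]
        have : G.connectedComponentMk d.snd = G.connectedComponentMk d.fst :=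
          ConnectedComponent.connectedComponentMk_eq_of_adj d.adj.symm
        rw [this]
        exact (mem_suppF G).mp (hS hdfst')
      refine ⟨insert d.snd S, ?_, ?_, ?_⟩
      · exact Finset.insert_subset hsndsupp hS
      · rw [Finset.card_insert_of_notMem hdsnd', hcard]
      · -- the new edge
        set ed : Sym2 V := s(d.fst, d.snd) with hed
        have hedmem : ed ∈ G.edgeFinset := by
          rw [mem_edgeFinset, mem_edgeSet]; exact d.adj
        have hednew : ed ∈ eIn G (insert d.snd S) := by
          rw [eIn, Finset.mem_filter]
          refine ⟨hedmem, fun w hw => ?_⟩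
          rcases Sym2.mem_iff.mp hw with rfl | rfl
          · exact Finset.mem_insert_of_mem hdfst'
          · exact Finset.mem_insert_self _ _
        have hedold : ed ∉ eIn G S := by
          rw [eIn, Finset.mem_filter]
          rintro ⟨-, h⟩
          exact hdsnd' (h d.snd (by rw [hed]; exact Sym2.mem_mk_right _ _))
        have hsub : insert ed (eIn G S) ⊆ eIn G (insert d.snd S) := by
          refine Finset.insert_subset hednew (eIn_mono G (Finset.subset_insert _ _))
        have h1 : (insert ed (eIn G S)).card = (eIn G S).card + 1 :=
          Finset.card_insert_of_notMem hedold
        have h2 := Finset.card_le_card hsub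
        omega

/-- A connected component with `v` vertices has at least `v - 1` edges. -/
lemma conn_bound (c : G.ConnectedComponent) : vC G c ≤ eC G c + 1 := by
  obtain ⟨S, hS, hcard, hbound⟩ := grow G c (vC G c) le_rfl
  have : S = suppF G c := Finset.eq_of_subset_of_card_le hS (by rw [hcard]; rfl)
  subst this
  exact hbound

/-- Chunk: a subset of size `k` of a component touching few edges. -/
lemma chunk (c : G.ConnectedComponent) (k : ℕ) (hk : k ≤ vC G c) :
    ∃ Z : Finset V, Z ⊆ suppF G c ∧ Z.card = k ∧
      (eTouch G Z).card + vC G c ≤ eC G c + k + 1 := by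
  obtain ⟨S, hS, hcard, hbound⟩ := grow G c (vC G c - k) (Nat.sub_le _ _)
  refine ⟨suppF G c \ S, Finset.sdiff_subset, ?_, ?_⟩
  · have hvceq : vC G c = (suppF G c).card := rfl
    rw [Finset.card_sdiff_of_subset hS, hcard]
    omega
  · have hsub : eTouch G (suppF G c \ S) ⊆ eIn G (suppF G c) \ eIn G S := by
      intro e he
      rw [eTouch, Finset.mem_filter] at he
      obtain ⟨he1, v, hv, hvZ⟩ := he
      rw [Finset.mem_sdiff] at hvZ
      rw [Finset.mem_sdiff]
      refine ⟨edge_all_in G he1 hv hvZ.1, ?_⟩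
      rw [eIn, Finset.mem_filter]
      rintro ⟨-, h⟩
      exact hvZ.2 (h v hv)
    have h1 := Finset.card_le_card hsub
    have h2 : (eIn G (suppF G c) \ eIn G S).card = eC G c - (eIn G S).card := by
      rw [Finset.card_sdiff_of_subset (eIn_mono G hS)]; rfl
    have h3 : (eIn G S).card ≤ eC G c := Finset.card_le_card (eIn_mono G hS)
    have hvceq : vC G c = (suppF G c).card := rfl
    omega

/-- Union of supports along a list. -/
noncomputable def unionSupp (p : List G.ConnectedComponent) : Finset V :=
  p.foldr (fun c acc => suppF G c ∪ acc) ∅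

lemma mem_unionSupp {p : List G.ConnectedComponent} {v : V} :
    v ∈ unionSupp G p ↔ ∃ c ∈ p, v ∈ suppF G c := by
  induction p with
  | nil => simp [unionSupp]
  | cons a p ih =>
    simp only [unionSupp, List.foldr_cons, Finset.mem_union, List.mem_cons]
    rw [unionSupp] at ih
    rw [ih]
    constructor
    · rintro (h | ⟨c, hc, hv⟩)
      · exact ⟨a, Or.inl rfl, h⟩
      · exact ⟨c, Or.inr hc, hv⟩
    · rintro ⟨c, (rfl | hc), hv⟩
      · exact Or.inl hv
      · exact Or.inr ⟨c, hc, hv⟩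

lemma suppF_eq_of_mem {c c' : G.ConnectedComponent} {v : V}
    (h1 : v ∈ suppF G c) (h2 : v ∈ suppF G c') : c = c' := by
  rw [mem_suppF] at h1 h2
  rw [← h1, ← h2]

lemma unionSupp_card {p : List G.ConnectedComponent} (hnd : p.Nodup) :
    (unionSupp G p).card = (p.map (vC G)).sum := by
  induction p with
  | nil => simp [unionSupp]
  | cons a p ih =>
    rcases List.nodup_cons.mp hnd with ⟨ha, hp⟩
    have hdisj : Disjoint (suppF G a) (unionSupp G p) := by
      rw [Finset.disjoint_left]
      intro v hv hv'
      obtain ⟨c, hc, hvc⟩ := (mem_unionSupp G).mp hv'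
      have hca : c = a := suppF_eq_of_mem G hvc hv
      exact ha (hca ▸ hc)
    show (suppF G a ∪ unionSupp G p).card = _
    rw [Finset.card_union_of_disjoint hdisj, List.map_cons, List.sum_cons, ih hp]
    rfl

lemma unionSupp_cover {p : List G.ConnectedComponent} :
    (eTouch G (unionSupp G p)).card ≤ (p.map (eC G)).sum := by
  induction p with
  | nil =>
    simp only [List.map_nil, List.sum_nil, Nat.le_zero, Finset.card_eq_zero]
    rw [eTouch]
    rw [Finset.filter_eq_empty_iff]
    rintro e -
    show ¬ ∃ v ∈ e, v ∈ (∅ : Finset V)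
    simp [unionSupp]
  | cons a p ih =>
    have hsub : eTouch G (unionSupp G (a :: p)) ⊆
        eTouch G (suppF G a) ∪ eTouch G (unionSupp G p) := by
      have : unionSupp G (a :: p) = suppF G a ∪ unionSupp G p := rfl
      rw [this]
      exact eTouch_union G _ _
    have h1 := Finset.card_le_card hsub
    have h2 := Finset.card_union_le (eTouch G (suppF G a)) (eTouch G (unionSupp G p))
    have h3 : (eTouch G (suppF G a)).card ≤ eC G a :=
      Finset.card_le_card (eTouch_subset_eIn G (Finset.Subset.refl _))
    rw [List.map_cons, List.sum_cons]
    omega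

/-! ### Arithmetic list lemmas -/

lemma list_sum_succ {α : Type*} (f g : α → ℕ) :
    ∀ L : List α, (∀ c ∈ L, f c + 1 = g c) → (L.map f).sum + L.length = (L.map g).sum := by
  intro L
  induction L with
  | nil => simp
  | cons a L ih =>
    intro h
    have ha := h a List.mem_cons_self
    have hL := ih (fun c hc => h c (List.mem_cons_of_mem a hc))
    simp only [List.map_cons, List.sum_cons, List.length_cons]
    omega

lemma list_sum_le {α : Type*} (f g : α → ℕ) :
    ∀ L : List α, (∀ c ∈ L, f c ≤ g c) → (L.map f).sum ≤ (L.map g).sum := by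
  intro L
  induction L with
  | nil => simp
  | cons a L ih =>
    intro h
    have ha := h a List.mem_cons_self
    have hL := ih (fun c hc => h c (List.mem_cons_of_mem a hc))
    simp only [List.map_cons, List.sum_cons]
    omega

end Stmt11Aux

open Stmt11Aux

/-- In a graph with `n = 2l+1` vertices and `n − 2` edges there is a set `Z` of exactly `l`
vertices such that at most `l − 1` edges have an endpoint in `Z`. -/
theorem stmt11 {V : Type*} [Fintype V] [DecidableEq V] (G : SimpleGraph V)
    [DecidableRel G.Adj] (l : ℕ) (hl : 1 ≤ l) (hv : Fintype.card V = 2 * l + 1)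
    (he : G.edgeFinset.card = 2 * l + 1 - 2) :
    ∃ Z : Finset V, Z.card = l ∧
      (G.edgeFinset.filter (fun e => ∃ v ∈ Z, v ∈ e)).card ≤ l - 1 := by
  classical
  -- totals
  have hVsum : ∑ c : G.ConnectedComponent, vC G c = 2 * l + 1 := by
    have hfw := Finset.card_eq_sum_card_fiberwise
      (f := fun v => G.connectedComponentMk v) (s := (Finset.univ : Finset V))
      (t := Finset.univ) (fun v _ => Finset.mem_univ _)
    rw [Finset.card_univ, hv] at hfw
    rw [hfw]
    apply Finset.sum_congr rfl
    intro c _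
    unfold vC
    apply congrArg
    ext v
    simp [suppF, Finset.mem_filter]
  set kap : Sym2 V → G.ConnectedComponent :=
    fun e => G.connectedComponentMk (Quot.out e).1 with hkap
  have hEsum : ∑ c : G.ConnectedComponent, eC G c = 2 * l - 1 := by
    have hfw := Finset.card_eq_sum_card_fiberwise
      (f := kap) (s := G.edgeFinset) (t := Finset.univ) (fun e _ => Finset.mem_univ _)
    rw [he] at hfw
    have h12 : (2 : ℕ) * l + 1 - 2 = 2 * l - 1 := by omega
    rw [h12] at hfw
    rw [hfw]
    apply Finset.sum_congr rfl
    intro c _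
    unfold eC
    apply congrArg
    ext e
    simp only [eIn, Finset.mem_filter, hkap]
    constructor
    · rintro ⟨he1, hall⟩
      exact ⟨he1, (mem_suppF G).mp (hall _ (Sym2.out_fst_mem e))⟩
    · rintro ⟨he1, hout⟩
      refine ⟨he1, fun w hw => ?_⟩
      have h := edge_all_in G he1 (Sym2.out_fst_mem e) ((mem_suppF G).mpr hout)
      rw [eIn, Finset.mem_filter] at h
      exact h.2 w hw
  have hconn : ∀ c : G.ConnectedComponent, vC G c ≤ eC G c + 1 := conn_bound G
  have hvle : ∀ c : G.ConnectedComponent, vC G c ≤ 2 * l + 1 := by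
    intro c
    have : suppF G c ⊆ Finset.univ := Finset.subset_univ _
    have := Finset.card_le_card this
    rw [Finset.card_univ, hv] at this
    exact this
  -- the sorting key: trees first, ascending size; non-trees last
  set key : G.ConnectedComponent → ℕ :=
    fun c => if eC G c + 1 = vC G c then vC G c else 2 * l + 2 with hkey
  obtain ⟨L, hLnd, hLmem, hLsort⟩ :=
    exists_sorted_list key (Finset.univ : Finset G.ConnectedComponent).card Finset.univ rfl
  have hLtoF : L.toFinset = (Finset.univ : Finset G.ConnectedComponent) := by
    ext c; simp [hLmem c]
  have hLsumV : (L.map (vC G)).sum = 2 * l + 1 := by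
    rw [list_sum_eq_finset_sum _ L hLnd, hLtoF]; exact hVsum
  have hLsumE : (L.map (eC G)).sum = 2 * l - 1 := by
    rw [list_sum_eq_finset_sum _ L hLnd, hLtoF]; exact hEsum
  -- split the sorted list
  obtain ⟨p, d, q, hLeq, hple, hplt⟩ := exists_split (vC G) L l (by omega)
  set σ : ℕ := (p.map (vC G)).sum with hσ
  set k : ℕ := l - σ with hk
  have hkd : k ≤ vC G d := by omega
  obtain ⟨Zd, hZd, hZdcard, hZdbound⟩ := chunk G d k hkd
  -- nodup facts from the split
  have hnd' : p.Nodup ∧ d ∉ p ∧ d ∉ q ∧ q.Nodup ∧ ∀ a ∈ p, a ∉ d :: q := by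
    rw [hLeq] at hLnd
    rw [List.nodup_append] at hLnd
    obtain ⟨hp, hdq, hdisj⟩ := hLnd
    rcases List.nodup_cons.mp hdq with ⟨hdnq, hqnd⟩
    refine ⟨hp, fun hc => hdisj d hc d List.mem_cons_self rfl, hdnq, hqnd, ?_⟩
    intro a ha hc
    exact hdisj a ha a hc rfl
  obtain ⟨hpnd, hdp, hdq', hqnd, hpdq⟩ := hnd'
  -- sortedness facts
  have hsorted := hLsort
  rw [hLeq] at hsorted
  have hsorted' := hsorted
  rw [List.pairwise_append] at hsorted'
  obtain ⟨hsp, hsdq, hcross⟩ := hsorted'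
  have hdq_rel : ∀ c ∈ q, key d ≤ key c := fun c hc => List.rel_of_pairwise_cons hsdq hc
  have hpd_rel : ∀ c ∈ p, key c ≤ key d := fun c hc => hcross c hc d List.mem_cons_self
  -- construct Z
  set Zp : Finset V := unionSupp G p with hZp
  have hZpcard : Zp.card = σ := unionSupp_card G hpnd
  have hZpcover : (eTouch G Zp).card ≤ (p.map (eC G)).sum := unionSupp_cover G
  set Z : Finset V := Zp ∪ Zd with hZ
  have hdisj : Disjoint Zp Zd := by
    rw [Finset.disjoint_left]
    intro v hv hv'
    obtain ⟨c, hc, hvc⟩ := (mem_unionSupp G).mp hv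
    have hcd : c = d := suppF_eq_of_mem G hvc (hZd hv')
    exact hdp (hcd ▸ hc)
  have hZcard : Z.card = l := by
    rw [hZ, Finset.card_union_of_disjoint hdisj, hZpcard, hZdcard]
    omega
  have hZcover : (eTouch G Z).card ≤ (p.map (eC G)).sum + (eTouch G Zd).card := by
    have h1 := Finset.card_le_card (eTouch_union G Zp Zd)
    have h2 := Finset.card_union_le (eTouch G Zp) (eTouch G Zd)
    have h3 : eTouch G Z = eTouch G (Zp ∪ Zd) := by rw [hZ]
    rw [h3]
    omega
  -- list sum decomposition
  have hsumVdec : σ + vC G d + (q.map (vC G)).sum = 2 * l + 1 := by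
    rw [← hLsumV, hLeq]
    simp only [List.map_append, List.sum_append, List.map_cons, List.sum_cons]
    omega
  have hsumEdec : (p.map (eC G)).sum + eC G d + (q.map (eC G)).sum = 2 * l - 1 := by
    rw [← hLsumE, hLeq]
    simp only [List.map_append, List.sum_append, List.map_cons, List.sum_cons]
    omega
  -- the main bound
  have hmain : (eTouch G Z).card ≤ l - 1 := by
    by_cases hdtree : eC G d + 1 = vC G d
    · -- d is a tree component: all of p are trees
      have hptree : ∀ c ∈ p, eC G c + 1 = vC G c := by
        intro c hc
        by_contra hcnt
        have h1 := hpd_rel c hc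
        rw [hkey] at h1
        simp only [if_neg hcnt, if_pos hdtree] at h1
        have := hvle d
        omega
      -- sum over trees: Ep + |p| = σ
      have hEp : (p.map (eC G)).sum + p.length = σ :=
        list_sum_succ (eC G) (vC G) p hptree
      -- p is nonempty
      have hpne : p ≠ [] := by
        intro hpnil
        subst hpnil
        have hσ0 : σ = 0 := by simp [hσ]
        -- there is a second tree component
        have h2tree : ∃ c', c' ≠ d ∧ eC G c' + 1 = vC G c' := by
          by_contra hno
          push_neg at hno
          have hge : ∀ c' ∈ Finset.univ.erase d, vC G c' ≤ eC G c' := by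
            intro c' hc'
            have hne := (Finset.mem_erase.mp hc').1
            have := hno c' hne
            have := hconn c'
            omega
          have hsumle := Finset.sum_le_sum hge
          have hA := Finset.sum_erase_add Finset.univ (vC G) (Finset.mem_univ d)
          have hB := Finset.sum_erase_add Finset.univ (eC G) (Finset.mem_univ d)
          rw [hVsum] at hA
          rw [hEsum] at hB
          omega
        obtain ⟨c', hc'd, hc'tree⟩ := h2tree
        have hc'L : c' ∈ L := (hLmem c').mpr (Finset.mem_univ c')
        rw [hLeq] at hc'L
        simp only [List.nil_append, List.mem_cons] at hc'L
        rcases hc'L with rfl | hc'q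
        · exact hc'd rfl
        · have hkeyrel := hdq_rel c' hc'q
          rw [hkey] at hkeyrel
          simp only [if_pos hdtree, if_pos hc'tree] at hkeyrel
          -- vC G d ≤ vC G c', and vC G d > l
          have hpair : eC G d + eC G c' ≤ 2 * l - 1 := by
            have hsub : ({d, c'} : Finset G.ConnectedComponent) ⊆ Finset.univ :=
              Finset.subset_univ _
            have := Finset.sum_le_sum_of_subset (f := eC G) hsub
            rw [Finset.sum_pair (Ne.symm hc'd), hEsum] at this
            exact this
          have hvd : l < vC G d := by omega
          omega
      have hlen : 1 ≤ p.length := by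
        cases p with
        | nil => exact absurd rfl hpne
        | cons a p => simp
      omega
    · -- d is not a tree: everything in q is a non-tree
      have hnq : ∀ c ∈ q, vC G c ≤ eC G c := by
        intro c hc
        have h1 := hdq_rel c hc
        rw [hkey] at h1
        simp only [if_neg hdtree] at h1
        have hcnt : ¬ (eC G c + 1 = vC G c) := by
          intro hcc
          rw [if_pos hcc] at h1
          have := hvle c
          omega
        rw [if_neg hcnt] at h1
        have := hconn c
        omega
      have hVqEq : (q.map (vC G)).sum ≤ (q.map (eC G)).sum :=
        list_sum_le (vC G) (eC G) q hnq
      have hdnontree : vC G d ≤ eC G d := by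
        have := hconn d
        omega
      omega
  refine ⟨Z, hZcard, ?_⟩
  have hfe : G.edgeFinset.filter (fun e => ∃ v ∈ Z, v ∈ e) = eTouch G Z := by
    ext e
    simp only [Finset.mem_filter, eTouch]
    tauto
  rw [hfe]
  exact hmain
end
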